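/- arXiv:1604.03002 — 7 statements merged into one kernel-verified Lean document; each statement's English description precedes it below -/
import Mathlib

section
/- Let r ≥ 3 and let G be a balanced r-partite graph with vertex classes V_1, ..., V_r each of size n, satisfying δ*(G) > (1 − 1/(r−1))·n. Then for any vertices u, v ∈ V(G) there exist copies K and K' of the complete graph K_r in G such that u ∈ V(K), v ∈ V(K'), and V(K) ∩ V(K') ≠ ∅. -/
/-- `f` picks out a copy of `K_r` in a balanced `r`-partite graph `G` on
`Fin r × Fin n` (one vertex `(i, f i)` in each vertex class). -/
def IsKr {r n : ℕ} (G : SimpleGraph (Fin r × Fin n)) (f : Fin r → Fin n) : Prop :=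
  ∀ i j : Fin r, i ≠ j → G.Adj (i, f i) (j, f j)

lemma common_nbr {r n : ℕ} (hr : 3 ≤ r) (hn : 0 < n) (G : SimpleGraph (Fin r × Fin n))
    (hdeg : ∀ (u : Fin r × Fin n) (j : Fin r), j ≠ u.1 →
      (1 - 1 / ((r : ℝ) - 1)) * n < (Set.ncard {y : Fin n | G.Adj u (j, y)} : ℝ))
    (F : Finset (Fin r × Fin n)) (hF : F.card ≤ r - 1) (i : Fin r)
    (hi : ∀ w ∈ F, i ≠ w.1) :
    ∃ y : Fin n, ∀ w ∈ F, G.Adj w (i, y) := by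
  classical
  by_contra hcon
  push_neg at hcon
  set A : Fin r × Fin n → Finset (Fin n) :=
    fun w => Finset.univ.filter (fun y => ¬ G.Adj w (i, y)) with hA
  have hrR : (1:ℝ) < (r:ℝ) - 1 := by
    have : (3:ℝ) ≤ (r:ℝ) := by exact_mod_cast hr
    linarith
  have key : ∀ w ∈ F, ((A w).card : ℝ) < (n : ℝ) / ((r:ℝ) - 1) := by
    intro w hw
    have hd := hdeg w i (hi w hw)
    have hnc : Set.ncard {y : Fin n | G.Adj w (i, y)} =
        (Finset.univ.filter (fun y => G.Adj w (i, y))).card := by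
      rw [Set.ncard_eq_toFinset_card']
      simp [Set.toFinset_setOf]
    rw [hnc] at hd
    have hsum : (Finset.univ.filter (fun y => G.Adj w (i, y))).card + (A w).card = n := by
      simpa using Finset.card_filter_add_card_filter_not
        (s := (Finset.univ : Finset (Fin n))) (p := fun y => G.Adj w (i, y))
    have hsumR : ((Finset.univ.filter (fun y => G.Adj w (i, y))).card : ℝ) + (A w).card = n := by
      exact_mod_cast hsum
    have heq : (1 - 1 / ((r : ℝ) - 1)) * n = n - n / ((r:ℝ) - 1) := by
      field_simp
    rw [heq] at hd
    linarith
  have hcover : (Finset.univ : Finset (Fin n)) ⊆ F.biUnion A := by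
    intro y _
    obtain ⟨w, hw, hnadj⟩ := hcon y
    exact Finset.mem_biUnion.2 ⟨w, hw, by simp [hA, hnadj]⟩
  have hn1 : (n : ℕ) ≤ (F.biUnion A).card := by
    calc n = (Finset.univ : Finset (Fin n)).card := by simp
    _ ≤ _ := Finset.card_le_card hcover
  have hn2 : ((F.biUnion A).card : ℕ) ≤ ∑ w ∈ F, (A w).card :=
    Finset.card_biUnion_le
  have hnR : (n : ℝ) ≤ ∑ w ∈ F, ((A w).card : ℝ) := by
    push_cast
    exact_mod_cast hn1.trans hn2
  have hFne : F.Nonempty := by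
    by_contra hFe
    rw [Finset.not_nonempty_iff_eq_empty] at hFe
    rw [hFe] at hnR
    simp at hnR
    exact absurd hnR (by positivity)
  have hlt : ∑ w ∈ F, ((A w).card : ℝ) < ∑ w ∈ F, (n : ℝ) / ((r:ℝ) - 1) :=
    Finset.sum_lt_sum_of_nonempty hFne key
  rw [Finset.sum_const, nsmul_eq_mul] at hlt
  have hFcard : (F.card : ℝ) ≤ (r:ℝ) - 1 := by
    have : (F.card : ℝ) ≤ ((r - 1 : ℕ) : ℝ) := by exact_mod_cast hF
    rw [Nat.cast_sub (by omega)] at this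
    simpa using this
  have hdivpos : (0:ℝ) ≤ (n : ℝ) / ((r:ℝ) - 1) := by positivity
  have : (F.card : ℝ) * ((n:ℝ) / ((r:ℝ) - 1)) ≤ ((r:ℝ) - 1) * ((n:ℝ) / ((r:ℝ) - 1)) :=
    mul_le_mul_of_nonneg_right hFcard hdivpos
  have heq2 : ((r:ℝ) - 1) * ((n:ℝ) / ((r:ℝ) - 1)) = n := by
    field_simp
  linarith

lemma ext_clique {r n : ℕ} (hr : 3 ≤ r) (hn : 0 < n) (G : SimpleGraph (Fin r × Fin n))
    (hdeg : ∀ (u : Fin r × Fin n) (j : Fin r), j ≠ u.1 →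
      (1 - 1 / ((r : ℝ) - 1)) * n < (Set.ncard {y : Fin n | G.Adj u (j, y)} : ℝ)) :
    ∀ (m : ℕ) (S : Finset (Fin r)) (h : Fin r → Fin n), Sᶜ.card = m →
      (∀ i ∈ S, ∀ j ∈ S, i ≠ j → G.Adj (i, h i) (j, h j)) →
      ∃ f : Fin r → Fin n, IsKr G f ∧ ∀ i ∈ S, f i = h i := by
  classical
  intro m
  induction m with
  | zero =>
    intro S h hc hS
    have hSu : S = Finset.univ := by
      have : Sᶜ = ∅ := Finset.card_eq_zero.1 hc
      simpa [Finset.compl_eq_empty_iff] using this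
    exact ⟨h, fun i j hij => hS i (by simp [hSu]) j (by simp [hSu]) hij,
      fun i _ => rfl⟩
  | succ m ih =>
    intro S h hc hS
    have hne : Sᶜ.Nonempty := Finset.card_pos.1 (by omega)
    obtain ⟨i, hiS⟩ := hne
    rw [Finset.mem_compl] at hiS
    -- find a common neighbour
    set F : Finset (Fin r × Fin n) := S.image (fun s => (s, h s)) with hFdef
    have hFcard : F.card ≤ r - 1 := by
      have h1 : F.card ≤ S.card := Finset.card_image_le
      have h2 : S.card < r := by
        have hSne : S ≠ Finset.univ := by
          intro hSu; rw [hSu] at hiS; exact hiS (Finset.mem_univ i)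
        have := Finset.card_lt_card (Finset.ssubset_univ_iff.2 hSne)
        simpa using this
      omega
    have hFi : ∀ w ∈ F, i ≠ w.1 := by
      intro w hw
      obtain ⟨s, hs, rfl⟩ := Finset.mem_image.1 hw
      exact fun hes => hiS (by rw [hes]; exact hs)
    obtain ⟨y, hy⟩ := common_nbr hr hn G hdeg F hFcard i hFi
    set h' : Fin r → Fin n := Function.update h i y with hh'
    have hS'c : (insert i S)ᶜ.card = m := by
      rw [Finset.compl_insert, Finset.card_erase_of_mem (Finset.mem_compl.2 hiS)]
      omega
    have hS' : ∀ a ∈ insert i S, ∀ b ∈ insert i S, a ≠ b → G.Adj (a, h' a) (b, h' b) := by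
      intro a ha b hb hab
      rcases Finset.mem_insert.1 ha with hae | haS
      · rcases Finset.mem_insert.1 hb with hbe | hbS
        · exact absurd (hae.trans hbe.symm) hab
        · have hb' : h' b = h b :=
            Function.update_of_ne (fun h2 => hiS (by rw [← h2]; exact hbS)) _ _
          subst hae
          rw [hb', hh', Function.update_self]
          exact (hy (b, h b) (Finset.mem_image.2 ⟨b, hbS, rfl⟩)).symm
      · rcases Finset.mem_insert.1 hb with hbe | hbS
        · have ha' : h' a = h a :=
            Function.update_of_ne (fun h2 => hiS (by rw [← h2]; exact haS)) _ _
          subst hbe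
          rw [ha', hh', Function.update_self]
          exact hy (a, h a) (Finset.mem_image.2 ⟨a, haS, rfl⟩)
        · have ha' : h' a = h a :=
            Function.update_of_ne (fun h2 => hiS (by rw [← h2]; exact haS)) _ _
          have hb' : h' b = h b :=
            Function.update_of_ne (fun h2 => hiS (by rw [← h2]; exact hbS)) _ _
          rw [ha', hb']
          exact hS a haS b hbS hab
    obtain ⟨f, hf, hfagree⟩ := ih (insert i S) h' hS'c hS'
    refine ⟨f, hf, fun s hs => ?_⟩
    rw [hfagree s (Finset.mem_insert_of_mem hs)]
    exact Function.update_of_ne (fun hse => hiS (by rw [← hse]; exact hs)) _ _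

/-- If `G` is balanced `r`-partite (classes of size `n`, `r ≥ 3`) with every vertex
having more than `(1 − 1/(r−1))·n` neighbours in every other class, then any two
vertices `u, v` lie in copies `K, K'` of `K_r` sharing a common vertex. -/
theorem stmt3 {r n : ℕ} (hr : 3 ≤ r) (G : SimpleGraph (Fin r × Fin n))
    (hpart : ∀ u v : Fin r × Fin n, G.Adj u v → u.1 ≠ v.1)
    (hdeg : ∀ (u : Fin r × Fin n) (j : Fin r), j ≠ u.1 →
      (1 - 1 / ((r : ℝ) - 1)) * n < (Set.ncard {y : Fin n | G.Adj u (j, y)} : ℝ)) :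
    ∀ u v : Fin r × Fin n, ∃ f g : Fin r → Fin n,
      IsKr G f ∧ IsKr G g ∧ f u.1 = u.2 ∧ g v.1 = v.2 ∧ ∃ i : Fin r, f i = g i := by
  classical
  intro u v
  have hn : 0 < n := Nat.lt_of_le_of_lt (Nat.zero_le _) u.2.isLt
  -- choose a class j different from u.1 and v.1
  obtain ⟨j, hju, hjv⟩ : ∃ j : Fin r, j ≠ u.1 ∧ j ≠ v.1 := by
    by_contra hcon
    push_neg at hcon
    have hsub : (Finset.univ : Finset (Fin r)) ⊆ {u.1, v.1} := by
      intro j _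
      rcases eq_or_ne j u.1 with rfl | hju
      · simp
      · simp [hcon j hju]
    have h1 : r ≤ ({u.1, v.1} : Finset (Fin r)).card := by
      simpa using Finset.card_le_card hsub
    have h2 : ({u.1, v.1} : Finset (Fin r)).card ≤ 2 :=
      Finset.card_le_two
    omega
  -- common neighbour y of u and v in class j
  obtain ⟨y, hy⟩ := common_nbr hr hn G hdeg {u, v} (by
      have : ({u, v} : Finset (Fin r × Fin n)).card ≤ 2 := Finset.card_le_two
      omega) j (by
      intro w hw
      rcases Finset.mem_insert.1 hw with rfl | hw
      · exact hju
      · rw [Finset.mem_singleton.1 hw]; exact hjv)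
  have hyu : G.Adj u (j, y) := hy u (by simp)
  have hyv : G.Adj v (j, y) := hy v (by simp)
  -- build f containing u and (j, y)
  obtain ⟨f, hf, hfagree⟩ := ext_clique hr hn G hdeg (({u.1, j} : Finset (Fin r))ᶜ).card ({u.1, j} : Finset (Fin r))
      (fun k => if k = u.1 then u.2 else y) rfl (by
    intro a ha b hb hab
    have hval : ∀ c ∈ ({u.1, j} : Finset (Fin r)),
        (c, if c = u.1 then u.2 else y) = (if c = u.1 then u else (j, y)) := by
      intro c hc
      rcases Finset.mem_insert.1 hc with rfl | hc
      · simp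
      · rw [Finset.mem_singleton.1 hc]
        simp [hju]
    rw [hval a ha, hval b hb]
    have hamem : a = u.1 ∨ a = j := by simpa using ha
    have hbmem : b = u.1 ∨ b = j := by simpa using hb
    rcases hamem with rfl | rfl <;> rcases hbmem with rfl | rfl
    · exact absurd rfl hab
    · simpa [hju.symm, hju] using hyu
    · simpa [hju.symm, hju] using hyu.symm
    · exact absurd rfl hab)
  -- build g containing v and (j, y)
  obtain ⟨g, hg, hgagree⟩ := ext_clique hr hn G hdeg (({v.1, j} : Finset (Fin r))ᶜ).card ({v.1, j} : Finset (Fin r))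
      (fun k => if k = v.1 then v.2 else y) rfl (by
    intro a ha b hb hab
    have hval : ∀ c ∈ ({v.1, j} : Finset (Fin r)),
        (c, if c = v.1 then v.2 else y) = (if c = v.1 then v else (j, y)) := by
      intro c hc
      rcases Finset.mem_insert.1 hc with rfl | hc
      · simp
      · rw [Finset.mem_singleton.1 hc]
        simp [hjv]
    rw [hval a ha, hval b hb]
    have hamem : a = v.1 ∨ a = j := by simpa using ha
    have hbmem : b = v.1 ∨ b = j := by simpa using hb
    rcases hamem with rfl | rfl <;> rcases hbmem with rfl | rfl
    · exact absurd rfl hab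
    · simpa [hjv.symm, hjv] using hyv
    · simpa [hjv.symm, hjv] using hyv.symm
    · exact absurd rfl hab)
  refine ⟨f, g, hf, hg, ?_, ?_, j, ?_⟩
  · have := hfagree u.1 (by simp)
    simpa using this
  · have := hgagree v.1 (by simp)
    simpa using this
  · have h1 := hfagree j (by simp)
    have h2 := hgagree j (by simp)
    rw [h1, h2, if_neg hju, if_neg hjv]
end

section
/- Let r ≥ 3, and let a, b be rational numbers with 0 < a ≤ b; set h := a + (r−1)b. If G is a balanced r-partite graph on rn vertices with δ*(G) ≥ (1 − b/h)·n, then G admits a perfect (a,b)-weighted fractional K_r-tiling, i.e., there exist non-negative weights w(K) for the rooted copies K of K_r in G such that for every vertex v of G, the sum over rooted copies K containing v of w(K)·(a if v is the root of K, b otherwise) equals 1. -/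
open Finset

/-- Farkas' lemma, algebraic form, by induction on the generator set. -/
theorem my_farkas {ι κ : Type*} [Fintype ι] (s : Finset κ) :
    ∀ (V : κ → ι → ℝ) (u : ι → ℝ),
    (∃ c : κ → ℝ, (∀ k, 0 ≤ c k) ∧ (∀ k ∉ s, c k = 0) ∧
      ∀ x, u x = ∑ k ∈ s, c k * V k x) ∨
    (∃ y : ι → ℝ, (∀ k ∈ s, ∑ x, V k x * y x ≤ 0) ∧ 0 < ∑ x, u x * y x) := by
  classical
  induction s using Finset.induction_on with
  | empty =>
    intro V u
    by_cases hu : ∀ x, u x = 0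
    · exact Or.inl ⟨fun _ => 0, fun _ => le_rfl, fun _ _ => rfl, fun x => by simp [hu x]⟩
    · push_neg at hu
      obtain ⟨x0, hx0⟩ := hu
      refine Or.inr ⟨u, by simp, ?_⟩
      exact Finset.sum_pos' (fun x _ => mul_self_nonneg _)
        ⟨x0, Finset.mem_univ _, mul_self_pos.2 hx0⟩
  | @insert k0 s hk0 ih =>
    intro V u
    rcases ih V u with ⟨c, hc0, hcs, hcu⟩ | ⟨y, hy, hyu⟩
    · refine Or.inl ⟨fun k => if k = k0 then 0 else c k, fun k => ?_, fun k hk => ?_, fun x => ?_⟩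
      · dsimp only; split <;> [exact le_rfl; exact hc0 k]
      · have h1 : k ≠ k0 := fun h => hk (h ▸ Finset.mem_insert_self k0 s)
        have h2 : k ∉ s := fun h => hk (Finset.mem_insert_of_mem h)
        simp [h1, hcs k h2]
      · dsimp only
        rw [Finset.sum_insert hk0, if_pos rfl, zero_mul, zero_add, hcu x]
        exact Finset.sum_congr rfl fun k hk => by
          have : k ≠ k0 := fun h => hk0 (h ▸ hk)
          simp [this]
    · by_cases hv : ∑ x, V k0 x * y x ≤ 0
      · refine Or.inr ⟨y, ?_, hyu⟩
        intro k hk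
        rcases Finset.mem_insert.1 hk with rfl | hk
        · exact hv
        · exact hy k hk
      · push_neg at hv
        set cv : ℝ := ∑ x, V k0 x * y x with hcv
        set P : (ι → ℝ) → ι → ℝ :=
          fun w x => w x - ((∑ x', w x' * y x') / cv) * V k0 x with hP
        have expand : ∀ w y' : ι → ℝ,
            ∑ x, P w x * y' x
              = ∑ x, w x * y' x - ((∑ x', w x' * y x') / cv) * ∑ x, V k0 x * y' x := by
          intro w y'
          simp only [hP, sub_mul, Finset.sum_sub_distrib]
          congr 1
          rw [Finset.mul_sum]
          exact Finset.sum_congr rfl fun x _ => by ring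
        have keyP : ∀ (w y' : ι → ℝ),
            ∑ x, P w x * y' x
              = ∑ x, w x * (y' x - ((∑ x', V k0 x' * y' x') / cv) * y x) := by
          intro w y'
          rw [expand]
          have : ∑ x, w x * (y' x - ((∑ x', V k0 x' * y' x') / cv) * y x)
              = ∑ x, w x * y' x - ((∑ x', V k0 x' * y' x') / cv) * ∑ x, w x * y x := by
            simp only [mul_sub, Finset.sum_sub_distrib]
            congr 1
            rw [Finset.mul_sum]
            exact Finset.sum_congr rfl fun x _ => by ring
          rw [this]
          ring
        rcases ih (fun k => P (V k)) (P u) with ⟨c, hc0, hcs, hcu⟩ | ⟨y', hy', hyu'⟩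
        · -- reconstruct a conic combination
          set γ : ℝ := (∑ x, u x * y x) / cv
              - ∑ k ∈ s, c k * ((∑ x, V k x * y x) / cv) with hγ
          have hγ0 : 0 ≤ γ := by
            rw [hγ]
            have h1 : 0 ≤ (∑ x, u x * y x) / cv := le_of_lt (div_pos hyu hv)
            have h2 : ∑ k ∈ s, c k * ((∑ x, V k x * y x) / cv) ≤ 0 := by
              apply Finset.sum_nonpos
              intro k hk
              exact mul_nonpos_of_nonneg_of_nonpos (hc0 k)
                (div_nonpos_of_nonpos_of_nonneg (hy k hk) (le_of_lt hv))
            linarith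
          refine Or.inl ⟨fun k => if k = k0 then γ else c k, fun k => ?_, fun k hk => ?_,
            fun x => ?_⟩
          · dsimp only; split <;> [exact hγ0; exact hc0 k]
          · have h1 : k ≠ k0 := fun h => hk (h ▸ Finset.mem_insert_self k0 s)
            have h2 : k ∉ s := fun h => hk (Finset.mem_insert_of_mem h)
            simp [h1, hcs k h2]
          · dsimp only
            rw [Finset.sum_insert hk0, if_pos rfl]
            have hsum : ∑ k ∈ s, (if k = k0 then γ else c k) * V k x
                = ∑ k ∈ s, c k * V k x := by
              refine Finset.sum_congr rfl fun k hk => ?_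
              have : k ≠ k0 := fun h => hk0 (h ▸ hk)
              simp [this]
            rw [hsum]
            have h1 := hcu x
            simp only [hP] at h1
            have h2 : ∑ k ∈ s, c k * (V k x - (∑ x', V k x' * y x') / cv * V k0 x)
                = ∑ k ∈ s, c k * V k x
                  - (∑ k ∈ s, c k * ((∑ x', V k x' * y x') / cv)) * V k0 x := by
              rw [Finset.sum_mul, ← Finset.sum_sub_distrib]
              exact Finset.sum_congr rfl fun k _ => by ring
            rw [h2] at h1
            rw [hγ]
            linarith [h1]
        · -- build the new separating functional
          refine Or.inr ⟨fun x => y' x - ((∑ x', V k0 x' * y' x') / cv) * y x, ?_, ?_⟩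
          · intro k hk
            rcases Finset.mem_insert.1 hk with rfl | hk
            · have h3 : ∑ x, V k x * (y' x - ((∑ x', V k x' * y' x') / cv) * y x)
                  = ∑ x, V k x * y' x - ((∑ x', V k x' * y' x') / cv) * ∑ x, V k x * y x := by
                simp only [mul_sub, Finset.sum_sub_distrib]
                congr 1
                rw [Finset.mul_sum]
                exact Finset.sum_congr rfl fun x _ => by ring
              rw [h3, ← hcv, div_mul_cancel₀ _ (ne_of_gt hv), sub_self]
            · rw [← keyP (V k)]
              exact hy' k hk
          · rw [← keyP u]
            exact hyu'

/-- Per-class quantile inequality via Abel summation. -/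
theorem perclass {n r m : ℕ} (npos : 0 < n) (hr : 1 ≤ r) (hrm : (r - 1) * m < n)
    (A B H : ℝ) (hA : 0 < A) (hAB : A ≤ B) (hH : H = A + ((r : ℝ) - 1) * B)
    (hm : H * m ≤ B * n) (D : ℕ → ℝ)
    (hD : ∀ k k', k ≤ k' → k' < n → D k' ≤ D k) :
    H * ∑ k ∈ range n, D k ≤ (n : ℝ) * ∑ q ∈ range r, (if q = r - 1 then A else B) * D (q * m) := by
  have hB : 0 < B := lt_of_lt_of_le hA hAB
  have hHpos : 0 < H := by
    rw [hH]
    have : (0:ℝ) ≤ ((r:ℝ) - 1) * B := by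
      apply mul_nonneg _ hB.le
      have : (1:ℝ) ≤ (r:ℝ) := by exact_mod_cast hr
      linarith
    linarith
  -- coefficient function
  set c : ℕ → ℝ := fun q => if q = r - 1 then A else B with hc
  set g : ℕ → ℝ := fun k => (n : ℝ) * (∑ q ∈ range r, if k = q * m then c q else 0) - H with hg
  have hqmlt : ∀ q ∈ range r, q * m < n := by
    intro q hq
    rw [mem_range] at hq
    calc q * m ≤ (r - 1) * m := Nat.mul_le_mul_right m (by omega)
    _ < n := hrm
  -- rewrite RHS as a sum over range n
  have hRHS : (n : ℝ) * ∑ q ∈ range r, c q * D (q * m) = ∑ k ∈ range n, (g k + H) * D k := by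
    have : ∀ k, (g k + H) * D k = ∑ q ∈ range r, (if k = q * m then (n:ℝ) * c q * D k else 0) := by
      intro k
      simp only [hg, sub_add_cancel, Finset.sum_mul, Finset.mul_sum]
      exact Finset.sum_congr rfl fun q _ => by split <;> simp <;> ring
    rw [Finset.sum_congr rfl fun k _ => this k, Finset.sum_comm]
    rw [Finset.mul_sum]
    refine Finset.sum_congr rfl fun q hq => ?_
    rw [Finset.sum_ite_eq' (range n) (q * m) (fun k => (n:ℝ) * c q * D k)]
    rw [if_pos (mem_range.2 (hqmlt q hq))]
    ring
  -- partial sums of g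
  have hGform : ∀ K : ℕ, ∑ k ∈ range K, g k
      = (n : ℝ) * (∑ q ∈ range r, if q * m < K then c q else 0) - H * K := by
    intro K
    simp only [hg, Finset.sum_sub_distrib, ← Finset.mul_sum, Finset.sum_comm (s := range K)]
    have : ∀ q ∈ range r, (∑ k ∈ range K, if k = q * m then c q else 0)
        = if q * m < K then c q else 0 := by
      intro q _
      rw [Finset.sum_ite_eq' (range K) (q * m) (fun _ => c q)]
      simp [Finset.mem_range]
    rw [Finset.sum_congr rfl this]
    simp [mul_comm]
  have hcsum : ∑ q ∈ range r, c q = H := by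
    have h1 : r = (r - 1) + 1 := by omega
    rw [h1, Finset.sum_range_succ]
    have h2 : ∀ q ∈ range (r-1), c q = B := by
      intro q hq
      rw [mem_range] at hq
      simp only [hc]
      rw [if_neg (by omega)]
    rw [Finset.sum_congr rfl h2, Finset.sum_const, hH]
    simp only [hc, if_pos rfl, nsmul_eq_mul, Finset.card_range]
    have : ((r - 1 : ℕ) : ℝ) = (r : ℝ) - 1 := by
      have : (1:ℝ) ≤ (r:ℝ) := by exact_mod_cast hr
      push_cast [Nat.cast_sub hr]
      ring
    rw [this]; ring
  have hGn : ∑ k ∈ range n, g k = 0 := by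
    rw [hGform]
    have : ∀ q ∈ range r, (if q * m < n then c q else 0) = c q := by
      intro q hq; rw [if_pos (hqmlt q hq)]
    rw [Finset.sum_congr rfl this, hcsum]
    ring
  have hGpos : ∀ K : ℕ, K ≤ n → 0 ≤ ∑ k ∈ range K, g k := by
    intro K hK
    rw [hGform]
    by_cases hcase : (r - 1) * m < K
    · have : ∀ q ∈ range r, (if q * m < K then c q else 0) = c q := by
        intro q hq
        rw [mem_range] at hq
        rw [if_pos]
        calc q * m ≤ (r-1) * m := Nat.mul_le_mul_right m (by omega)
        _ < K := hcase
      rw [Finset.sum_congr rfl this, hcsum]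
      have : H * K ≤ H * n := by
        apply mul_le_mul_of_nonneg_left _ hHpos.le
        exact_mod_cast hK
      linarith
    · push_neg at hcase
      set t := ((range r).filter (fun q => q * m < K)).card with ht
      have htr : (r-1) ∉ (range r).filter (fun q => q * m < K) := by
        simp only [Finset.mem_filter, not_and]
        intro _
        omega
      have hsum2 : ∑ q ∈ range r, (if q * m < K then c q else 0) = B * t := by
        rw [← Finset.sum_filter]
        have : ∀ q ∈ (range r).filter (fun q => q * m < K), c q = B := by
          intro q hq
          have : q ≠ r - 1 := fun h => htr (h ▸ hq)
          simp only [hc]; rw [if_neg this]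
        rw [Finset.sum_congr rfl this, Finset.sum_const, ht]
        simp [mul_comm]
      have hKtm : K ≤ t * m := by
        by_contra hcon
        push_neg at hcon
        have htltr : t < r := by
          rcases Nat.lt_or_ge t r with h | h
          · exact h
          · exfalso
            have : (r-1) * m ≤ t * m := Nat.mul_le_mul_right m (by omega)
            omega
        have hsub : range (t+1) ⊆ (range r).filter (fun q => q * m < K) := by
          intro q hq
          rw [mem_range] at hq
          rw [Finset.mem_filter, mem_range]
          constructor
          · omega
          · calc q * m ≤ t * m := Nat.mul_le_mul_right m (by omega)
            _ < K := hcon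
        have := Finset.card_le_card hsub
        rw [Finset.card_range] at this
        omega
      rw [hsum2]
      have step1 : H * K ≤ H * (t * m) := by
        apply mul_le_mul_of_nonneg_left _ hHpos.le
        exact_mod_cast hKtm
      have step2 : H * ((t:ℝ) * (m:ℝ)) ≤ (t:ℝ) * (B * n) := by
        have h5 := mul_le_mul_of_nonneg_left hm (show (0:ℝ) ≤ (t:ℝ) by positivity)
        nlinarith [h5]
      have h6 : (n:ℝ) * (B * (t:ℝ)) = (t:ℝ) * (B * (n:ℝ)) := by ring
      linarith
  -- Abel summation
  have habel := Finset.sum_range_by_parts (R := ℝ) (M := ℝ) D g n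
  have hfinal : 0 ≤ ∑ k ∈ range n, g k * D k := by
    have hcomm : ∑ k ∈ range n, g k * D k = ∑ k ∈ range n, D k • g k := by
      exact Finset.sum_congr rfl fun k _ => by simp [smul_eq_mul]; ring
    rw [hcomm, habel, hGn]
    simp only [smul_eq_mul, mul_zero, zero_sub, le_neg, neg_zero]
    apply Finset.sum_nonpos
    intro i hi
    rw [mem_range] at hi
    apply mul_nonpos_of_nonpos_of_nonneg
    · have := hD i (i+1) (Nat.le_succ i) (by omega)
      linarith
    · exact hGpos (i+1) (by omega)
  have hexpand : ∑ k ∈ range n, (g k + H) * D k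
      = ∑ k ∈ range n, g k * D k + H * ∑ k ∈ range n, D k := by
    rw [Finset.mul_sum, ← Finset.sum_add_distrib]
    exact Finset.sum_congr rfl fun k _ => by ring
  rw [hRHS, hexpand]
  linarith

/-- Greedy construction of a clique with quantile guarantees. -/
theorem greedy_clique {r n : ℕ} (G : SimpleGraph (Fin r × Fin n)) (m : ℕ)
    (npos : 0 < n) (hrm : (r - 1) * m < n)
    (hml : ∀ (u : Fin r × Fin n) (j : Fin r), j ≠ u.1 →
      ({x : Fin n | ¬ G.Adj u (j, x)}).ncard ≤ m)
    (CL : ℕ → Fin r) (hCL : ∀ q q', q < r → q' < r → CL q = CL q' → q = q')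
    (σ : Fin r → Equiv.Perm (Fin n)) :
    ∀ p, p ≤ r → ∃ k : ℕ → Fin n, (∀ q, q < p → (k q : ℕ) ≤ q * m) ∧
      (∀ q q', q < q' → q' < p →
        G.Adj (CL q, σ (CL q) (k q)) (CL q', σ (CL q') (k q'))) := by
  classical
  intro p
  induction p with
  | zero =>
    intro _
    exact ⟨fun _ => ⟨0, npos⟩, fun q hq => absurd hq (Nat.not_lt_zero q), fun q q' _ hq' =>
      absurd hq' (Nat.not_lt_zero q')⟩
  | succ p ih =>
    intro hp
    obtain ⟨k, hk1, hk2⟩ := ih (Nat.le_of_succ_le hp)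
    have hpr : p < r := hp
    have hpm : p * m < n := by
      calc p * m ≤ (r - 1) * m := Nat.mul_le_mul_right m (by omega)
      _ < n := hrm
    set j : Fin r := CL p with hj
    set Cand : Finset (Fin n) := univ.filter (fun κ => (κ : ℕ) ≤ p * m) with hCand
    have hCandcard : p * m + 1 ≤ Cand.card := by
      have hinj : ∀ i ∈ Finset.range (p * m + 1), ∀ i' ∈ Finset.range (p * m + 1),
          (fun i => (⟨min i (n-1), by omega⟩ : Fin n)) i
            = (fun i => (⟨min i (n-1), by omega⟩ : Fin n)) i' → i = i' := by
        intro i hi i' hi' hee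
        rw [Finset.mem_range] at hi hi'
        have h1 : min i (n-1) = i := min_eq_left (by omega)
        have h2 : min i' (n-1) = i' := min_eq_left (by omega)
        have := congrArg Fin.val hee
        simpa [h1, h2] using this
      have hmaps : ∀ i ∈ Finset.range (p * m + 1),
          (⟨min i (n-1), by omega⟩ : Fin n) ∈ Cand := by
        intro i hi
        rw [Finset.mem_range] at hi
        rw [hCand, Finset.mem_filter]
        refine ⟨Finset.mem_univ _, ?_⟩
        simp only
        omega
      have := Finset.card_le_card_of_injOn _ hmaps hinj
      simpa using this
    set Bad : Finset (Fin n) := (Finset.range p).biUnion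
      (fun q => ({κ : Fin n | ¬ G.Adj (CL q, σ (CL q) (k q)) (j, σ j κ)}).toFinset) with hBad
    have hBadcard : Bad.card ≤ p * m := by
      rw [hBad]
      refine le_trans (Finset.card_biUnion_le) ?_
      have hone : ∀ q ∈ Finset.range p,
          ({κ : Fin n | ¬ G.Adj (CL q, σ (CL q) (k q)) (j, σ j κ)}).toFinset.card ≤ m := by
        intro q hq
        rw [Finset.mem_range] at hq
        have hne : j ≠ CL q := by
          intro hc
          have := hCL p q hpr (by omega) hc
          omega
        have hcard := hml (CL q, σ (CL q) (k q)) j hne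
        rw [← Set.ncard_eq_toFinset_card']
        calc ({κ : Fin n | ¬ G.Adj (CL q, σ (CL q) (k q)) (j, σ j κ)}).ncard
            = ({x : Fin n | ¬ G.Adj (CL q, σ (CL q) (k q)) (j, x)}).ncard := by
              have himg : {κ : Fin n | ¬ G.Adj (CL q, σ (CL q) (k q)) (j, σ j κ)}
                  = (σ j).symm '' {x : Fin n | ¬ G.Adj (CL q, σ (CL q) (k q)) (j, x)} := by
                ext κ
                simp only [Set.mem_setOf_eq, Set.mem_image]
                constructor
                · intro hκ
                  exact ⟨σ j κ, hκ, (σ j).symm_apply_apply κ⟩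
                · rintro ⟨x, hx, rfl⟩
                  rwa [(σ j).apply_symm_apply]
              rw [himg, Set.ncard_image_of_injective _ (σ j).symm.injective]
        _ ≤ m := hcard
      calc ∑ q ∈ Finset.range p,
            ({κ : Fin n | ¬ G.Adj (CL q, σ (CL q) (k q)) (j, σ j κ)}).toFinset.card
          ≤ ∑ _q ∈ Finset.range p, m := Finset.sum_le_sum hone
      _ = p * m := by rw [Finset.sum_const, Finset.card_range, smul_eq_mul]
    have hnonempty : (Cand \ Bad).Nonempty := by
      rw [← Finset.card_pos]
      have := Finset.le_card_sdiff Bad Cand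
      omega
    obtain ⟨κ, hκ⟩ := hnonempty
    rw [Finset.mem_sdiff] at hκ
    obtain ⟨hκC, hκB⟩ := hκ
    refine ⟨fun q => if q = p then κ else k q, ?_, ?_⟩
    · intro q hq
      simp only
      by_cases hqp : q = p
      · rw [if_pos hqp, hqp]
        rw [hCand, Finset.mem_filter] at hκC
        exact hκC.2
      · rw [if_neg hqp]
        exact hk1 q (by omega)
    · intro q q' hqq' hq'
      simp only
      by_cases hq'p : q' = p
      · have hqp : q ≠ p := by omega
        rw [if_neg hqp, if_pos hq'p, hq'p]
        by_contra hadj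
        apply hκB
        rw [hBad, Finset.mem_biUnion]
        refine ⟨q, Finset.mem_range.2 (by omega), ?_⟩
        rw [Set.mem_toFinset]
        exact hadj
      · have hqp : q ≠ p := by omega
        rw [if_neg hqp, if_neg hq'p]
        exact hk2 q q' hqq' (by omega)

open scoped Fin.NatCast Fin.CommRing


/-- Let `r ≥ 3`, `0 < a ≤ b` rationals, `h = a + (r−1)b`.  If `G` is balanced
`r`-partite on `rn` vertices with `δ*(G) ≥ (1 − b/h)·n`, then `G` admits a perfect
`(a,b)`-weighted fractional `K_r`-tiling: non-negative weights on rooted copies of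
`K_r` so that at each vertex the total weighted contribution (coefficient `a` at the
root, `b` elsewhere) is exactly `1`. -/
theorem stmt5 {r n : ℕ} (hr : 3 ≤ r) (a b : ℚ) (ha : 0 < a) (hab : a ≤ b)
    (h : ℚ) (hh : h = a + ((r : ℚ) - 1) * b)
    (G : SimpleGraph (Fin r × Fin n))
    (hpart : ∀ u v : Fin r × Fin n, G.Adj u v → u.1 ≠ v.1)
    (hdeg : ∀ (u : Fin r × Fin n) (j : Fin r), j ≠ u.1 →
      (1 - (b : ℝ) / (h : ℝ)) * n ≤ (Set.ncard {y : Fin n | G.Adj u (j, y)} : ℝ)) :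
    ∃ w : ((Fin r → Fin n) × Fin r) → ℝ,
      (∀ K, 0 ≤ w K) ∧
      (∀ K, ¬ IsKr G K.1 → w K = 0) ∧
      (∀ v : Fin r × Fin n,
        ∑ K : (Fin r → Fin n) × Fin r,
          (if K.1 v.1 = v.2 then w K * (if K.2 = v.1 then (a : ℝ) else (b : ℝ)) else 0)
          = 1) := by
  classical
  set A : ℝ := (a : ℝ) with hAdef
  set B : ℝ := (b : ℝ) with hBdef
  set H : ℝ := (h : ℝ) with hHdef
  have hA : 0 < A := by rw [hAdef]; exact_mod_cast ha
  have hAB : A ≤ B := by rw [hAdef, hBdef]; exact_mod_cast hab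
  have hB : 0 < B := lt_of_lt_of_le hA hAB
  have hr1 : (1:ℝ) ≤ (r:ℝ) := by exact_mod_cast (by omega : 1 ≤ r)
  have hH : H = A + ((r:ℝ) - 1) * B := by
    rw [hHdef, hh]; push_cast; ring
  have hHpos : 0 < H := by
    have : (0:ℝ) ≤ ((r:ℝ) - 1) * B := mul_nonneg (by linarith) hB.le
    rw [hH]; linarith
  -- the column vectors
  set col : ((Fin r → Fin n) × Fin r) → (Fin r × Fin n) → ℝ :=
    fun K v => if K.1 v.1 = v.2 then (if K.2 = v.1 then A else B) else 0 with hcol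
  set s : Finset ((Fin r → Fin n) × Fin r) :=
    univ.filter (fun K => IsKr G K.1) with hs
  rcases my_farkas s col (fun _ => 1) with ⟨c, hc0, hcout, hceq⟩ | ⟨y, hKy, hy⟩
  · -- the desired weights exist
    refine ⟨c, hc0, ?_, ?_⟩
    · intro K hK
      apply hcout
      rw [hs, Finset.mem_filter]
      tauto
    · intro v
      have h1 := (hceq v).symm
      have h2 : ∀ K : (Fin r → Fin n) × Fin r,
          (if K.1 v.1 = v.2 then c K * (if K.2 = v.1 then A else B) else 0)
            = c K * col K v := by
        intro K
        rw [hcol]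
        by_cases hc : K.1 v.1 = v.2 <;> simp [hc]
      rw [Finset.sum_congr rfl (fun K _ => h2 K)]
      rw [← h1]
      symm
      apply Finset.sum_subset (Finset.subset_univ s)
      intro K _ hK
      rw [hcout K hK, zero_mul]
  · -- refute the separating functional
    exfalso
    simp only [one_mul] at hy
    rcases Nat.eq_zero_or_pos n with rfl | npos
    · rw [Finset.univ_eq_empty, Finset.sum_empty] at hy
      exact lt_irrefl 0 hy
    have hrpos : 0 < r := by omega
    have : NeZero r := ⟨by omega⟩
    -- basic quantities
    set m : ℕ := Nat.floor ((B / H) * n) with hm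
    have hdn : (0:ℝ) ≤ (B / H) * n := by positivity
    have hmle : (m : ℝ) ≤ (B / H) * n := Nat.floor_le hdn
    have hml : ∀ (u : Fin r × Fin n) (j : Fin r), j ≠ u.1 →
        ({x : Fin n | ¬ G.Adj u (j, x)}).ncard ≤ m := by
      intro u j hj
      have hdeg' := hdeg u j hj
      have hcompl : {x : Fin n | ¬ G.Adj u (j, x)} = {x : Fin n | G.Adj u (j, x)}ᶜ := by
        ext x; simp
      have hsum := Set.ncard_add_ncard_compl {x : Fin n | G.Adj u (j, x)}
      rw [Nat.card_eq_fintype_card, Fintype.card_fin] at hsum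
      apply Nat.le_floor
      rw [hcompl]
      have hle : ({x : Fin n | G.Adj u (j, x)}ᶜ.ncard : ℝ)
          = (n : ℝ) - ({x : Fin n | G.Adj u (j, x)}.ncard : ℝ) := by
        have : {x : Fin n | G.Adj u (j, x)}.ncard ≤ n := by omega
        push_cast [← hsum]
        ring
      rw [hle]
      have : (1 - B / H) * n ≤ ({x : Fin n | G.Adj u (j, x)}.ncard : ℝ) := hdeg'
      nlinarith [Nat.cast_nonneg (α := ℝ) n]
    have hrm : (r - 1) * m < n := by
      have hreal : ((r-1 : ℕ) : ℝ) * m < n := by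
        have h1 : ((r-1:ℕ):ℝ) = (r:ℝ) - 1 := by
          push_cast [Nat.cast_sub (by omega : 1 ≤ r)]; ring
        rw [h1]
        have h2 : ((r:ℝ) - 1) * m ≤ ((r:ℝ) - 1) * ((B/H) * n) :=
          mul_le_mul_of_nonneg_left hmle (by linarith)
        have h3 : ((r:ℝ) - 1) * ((B/H) * n) < n := by
          have hlt : ((r:ℝ) - 1) * (B/H) < 1 := by
            have heq : ((r:ℝ) - 1) * (B/H) = (((r:ℝ) - 1) * B) / H := by ring
            rw [heq, div_lt_one hHpos, hH]
            linarith
          have hnpos : (0:ℝ) < n := by exact_mod_cast npos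
          nlinarith
        linarith
      exact_mod_cast hreal
    have hm2 : H * m ≤ B * n := by
      have := mul_le_mul_of_nonneg_left hmle hHpos.le
      calc H * m ≤ H * ((B/H) * n) := this
      _ = B * n := by field_simp
    -- the quantile orders
    set σ : Fin r → Equiv.Perm (Fin n) :=
      fun i => Tuple.sort (fun x : Fin n => -y (i, x)) with hσdef
    have hσ : ∀ (i : Fin r) (k k' : Fin n), k ≤ k' → y (i, σ i k') ≤ y (i, σ i k) := by
      intro i k k' hkk'
      have := Tuple.monotone_sort (fun x : Fin n => -y (i, x)) hkk'
      simp only [Function.comp_apply, hσdef] at this ⊢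
      linarith
    -- the constraint in convenient form
    have hC : ∀ f : Fin r → Fin n, IsKr G f → ∀ i : Fin r,
        ∑ j : Fin r, (if i = j then A else B) * y (j, f j) ≤ 0 := by
      intro f hf i
      have hmem : (⟨f, i⟩ : (Fin r → Fin n) × Fin r) ∈ s := by
        rw [hs, Finset.mem_filter]; exact ⟨Finset.mem_univ _, hf⟩
      have := hKy ⟨f, i⟩ hmem
      rw [Fintype.sum_prod_type] at this
      calc ∑ j : Fin r, (if i = j then A else B) * y (j, f j)
          = ∑ j : Fin r, ∑ x : Fin n, col (f, i) (j, x) * y (j, x) := by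
            refine Finset.sum_congr rfl fun j _ => ?_
            rw [hcol]
            simp only
            rw [Finset.sum_eq_single (f j)]
            · rw [if_pos rfl]
            · intro x _ hx
              rw [if_neg (fun hc => hx hc.symm), zero_mul]
            · intro hmem'
              exact absurd (Finset.mem_univ _) hmem'
      _ ≤ 0 := this
    -- class labels, clique construction
    have hqmn : ∀ q : ℕ, q < r → q * m < n := by
      intro q hq
      calc q * m ≤ (r-1) * m := Nat.mul_le_mul_right m (by omega)
      _ < n := hrm
    -- D functions
    set Df : Fin r → ℕ → ℝ := fun j t => if ht : t < n then y (j, σ j ⟨t, ht⟩) else 0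
      with hDf
    have hDanti : ∀ j : Fin r, ∀ t t', t ≤ t' → t' < n → Df j t' ≤ Df j t := by
      intro j t t' htt' ht'
      have ht : t < n := by omega
      rw [hDf]
      simp only [dif_pos ht, dif_pos ht']
      exact hσ j ⟨t, ht⟩ ⟨t', ht'⟩ htt'
    -- For each i, the greedy clique gives the constraint on quantiles
    have hmain : ∀ i : Fin r,
        ∑ j : Fin r, (if i = j then A else B)
          * Df j (((j - (i + 1) : Fin r)).val * m) ≤ 0 := by
      intro i
      set CL : ℕ → Fin r := fun q => i + 1 + (q : Fin r) with hCLdef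
      have hCLinj : ∀ q q', q < r → q' < r → CL q = CL q' → q = q' := by
        intro q q' hq hq' he
        rw [hCLdef] at he
        simp only at he
        have := add_left_cancel he
        have hv := congrArg Fin.val this
        rwa [Fin.val_cast_of_lt hq, Fin.val_cast_of_lt hq'] at hv
      obtain ⟨k, hk1, hk2⟩ := greedy_clique G m npos hrm hml CL hCLinj σ r le_rfl
      -- the clique as a function on classes
      set pos : Fin r → Fin r := fun j => j - (i + 1) with hpos
      have hCLpos : ∀ j : Fin r, CL (pos j).val = j := by
        intro j
        rw [hCLdef, hpos]
        simp only [Fin.cast_val_eq_self]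
        exact add_sub_cancel _ _
      set f : Fin r → Fin n := fun j => σ j (k (pos j).val) with hf
      have hposinj : Function.Injective pos := by
        intro x x' hx
        rw [hpos] at hx
        simpa using sub_left_injective hx
      have hclique : IsKr G f := by
        intro j j' hjj'
        have hne : (pos j).val ≠ (pos j').val := by
          intro hc
          exact hjj' (hposinj (Fin.ext hc))
        rcases Nat.lt_or_ge (pos j).val (pos j').val with hlt | hge
        · have := hk2 (pos j).val (pos j').val hlt (Fin.is_lt _)
          rw [hCLpos j, hCLpos j'] at this
          exact this
        · have hlt : (pos j').val < (pos j).val := by omega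
          have := hk2 (pos j').val (pos j).val hlt (Fin.is_lt _)
          rw [hCLpos j, hCLpos j'] at this
          exact this.symm
      have hcons := hC f hclique i
      refine le_trans (Finset.sum_le_sum ?_) hcons
      intro j _
      have hcoef : (0:ℝ) < if i = j then A else B := by
        split <;> [exact hA; exact hB]
      apply mul_le_mul_of_nonneg_left _ hcoef.le
      -- Df j ((pos j).val * m) ≤ y (j, f j)
      have hq : (pos j).val < r := Fin.is_lt _
      have hqm : (pos j).val * m < n := hqmn _ hq
      rw [hDf]
      simp only [dif_pos hqm]
      rw [hf]
      simp only
      have hkle : (k (pos j).val : ℕ) ≤ (pos j).val * m := hk1 _ hq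
      rw [dif_pos (show ((j - (i + 1) : Fin r)).val * m < n from hqm)]
      exact hσ j (k (pos j).val) ⟨(pos j).val * m, hqm⟩ hkle
    -- reindex and sum over i
    have hneg1val : ((-1 : Fin r)).val = r - 1 := by
      have h1 : ((r - 1 : ℕ) : Fin r) = -1 := by
        have : ((r : ℕ) : Fin r) = 0 := by
          exact_mod_cast Fin.natCast_self r
        rw [Nat.cast_sub (by omega : 1 ≤ r), this]
        push_cast
        ring
      rw [← h1, Fin.val_cast_of_lt (by omega : r - 1 < r)]
    have hswap : ∀ j : Fin r,
        ∑ i : Fin r, (if i = j then A else B) * Df j (((j - (i + 1) : Fin r)).val * m)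
          = ∑ q ∈ range r, (if q = r - 1 then A else B) * Df j (q * m) := by
      intro j
      set e : Fin r ≃ Fin r := (Equiv.addRight (1 : Fin r)).trans (Equiv.subLeft j) with hedef
      have he : ∀ i : Fin r, e i = j - (i + 1) := fun i => by
        rw [hedef]; rfl
      have h1 : ∑ i : Fin r, (if i = j then A else B) * Df j (((j - (i+1) : Fin r)).val * m)
          = ∑ i : Fin r, (if e i = -1 then A else B) * Df j ((e i).val * m) := by
        refine Finset.sum_congr rfl fun i _ => ?_
        rw [he]
        congr 1
        congr 1
        apply propext
        constructor
        · intro hij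
          rw [hij]
          ring
        · intro hij
          have : j = i := by
            have := congrArg (fun x => x + (i+1)) hij
            simp only [sub_add_cancel] at this
            rw [this]; ring
          exact this.symm
      have h2 : ∑ i : Fin r, (if e i = -1 then A else B) * Df j ((e i).val * m)
          = ∑ ρ : Fin r, (if ρ = -1 then A else B) * Df j (ρ.val * m) :=
        Equiv.sum_comp e (fun ρ => (if ρ = -1 then A else B) * Df j (ρ.val * m))
      have h3 : ∑ ρ : Fin r, (if ρ = -1 then A else B) * Df j (ρ.val * m)
          = ∑ q ∈ range r, (if q = r - 1 then A else B) * Df j (q * m) := by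
        rw [← Fin.sum_univ_eq_sum_range (fun q => (if q = r - 1 then A else B) * Df j (q * m)) r]
        refine Finset.sum_congr rfl fun ρ _ => ?_
        congr 1
        congr 1
        apply propext
        constructor
        · intro hρ; rw [hρ, hneg1val]
        · intro hρ; exact Fin.ext (by rw [hneg1val]; exact hρ)
      rw [h1, h2, h3]
    have hsumall : ∑ j : Fin r, ∑ q ∈ range r, (if q = r - 1 then A else B) * Df j (q * m) ≤ 0 := by
      have h1 : ∑ i : Fin r, ∑ j : Fin r,
          (if i = j then A else B) * Df j (((j - (i + 1) : Fin r)).val * m) ≤ 0 :=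
        Finset.sum_nonpos fun i _ => hmain i
      rw [Finset.sum_comm] at h1
      calc ∑ j : Fin r, ∑ q ∈ range r, (if q = r - 1 then A else B) * Df j (q * m)
          = ∑ j : Fin r, ∑ i : Fin r,
              (if i = j then A else B) * Df j (((j - (i + 1) : Fin r)).val * m) := by
            exact Finset.sum_congr rfl fun j _ => (hswap j).symm
      _ ≤ 0 := h1
    -- apply perclass to each class
    have hperclass : ∀ j : Fin r,
        H * ∑ x : Fin n, y (j, x)
          ≤ (n:ℝ) * ∑ q ∈ range r, (if q = r - 1 then A else B) * Df j (q * m) := by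
      intro j
      have h1 := perclass npos (by omega : 1 ≤ r) hrm A B H hA hAB hH hm2 (Df j)
        (fun k k' hkk' hk' => hDanti j k k' hkk' hk')
      have h2 : ∑ k ∈ range n, Df j k = ∑ x : Fin n, y (j, x) := by
        rw [← Fin.sum_univ_eq_sum_range (fun k => Df j k) n]
        rw [← Equiv.sum_comp (σ j) (fun x => y (j, x))]
        refine Finset.sum_congr rfl fun x _ => ?_
        rw [hDf]
        simp only [dif_pos x.isLt, Fin.eta]
      rwa [h2] at h1
    -- combine
    have hfinal : H * ∑ v : Fin r × Fin n, y v ≤ 0 := by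
      rw [Fintype.sum_prod_type, Finset.mul_sum]
      calc ∑ j : Fin r, H * ∑ x : Fin n, y (j, x)
          ≤ ∑ j : Fin r, (n:ℝ) * ∑ q ∈ range r, (if q = r - 1 then A else B) * Df j (q * m) :=
            Finset.sum_le_sum fun j _ => hperclass j
      _ = (n:ℝ) * ∑ j : Fin r, ∑ q ∈ range r, (if q = r - 1 then A else B) * Df j (q * m) := by
            rw [Finset.mul_sum]
      _ ≤ 0 := mul_nonpos_of_nonneg_of_nonpos (Nat.cast_nonneg n) hsumall
    nlinarith [hy, hHpos, hfinal]
end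

section
/- Let G be a graph and let G' be its m-fold blow-up (each vertex replaced by m copies, each edge replaced by the complete bipartite graph between the corresponding sets of copies). If G' admits a perfect (a,b)-weighted fractional K_r-tiling, then so does G: assign to each rooted copy of K_r in G the average of the weights of the m^r corresponding rooted copies in G'. -/
/-- `f` picks out a copy of `K_r` in a graph `G` (pairwise adjacent vertices). -/
def IsKrCopy {V : Type*} {r : ℕ} (G : SimpleGraph V) (f : Fin r → V) : Prop :=
  ∀ i j : Fin r, i ≠ j → G.Adj (f i) (f j)

/-- `w` is a perfect `(a,b)`-weighted fractional `K_r`-tiling of `G`: non-negative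
weights supported on rooted copies of `K_r` (pairs `(f, ρ)` with root `f ρ`), such
that at each vertex `v` the total weighted contribution, with coefficient `a` if `v`
is the root and `b` otherwise, equals `1`. -/
def PerfFracTiling {V : Type*} [Fintype V] [DecidableEq V] (G : SimpleGraph V)
    (r : ℕ) (a b : ℝ) (w : ((Fin r → V) × Fin r) → ℝ) : Prop :=
  (∀ K, 0 ≤ w K) ∧
  (∀ K, ¬ IsKrCopy G K.1 → w K = 0) ∧
  (∀ v : V, ∑ K : (Fin r → V) × Fin r, ∑ i : Fin r,
      (if K.1 i = v then w K * (if i = K.2 then a else b) else 0) = 1)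

/-- The `m`-fold blow-up of `G`: each vertex is replaced by `m` copies and each edge
by the complete bipartite graph between the corresponding sets of copies. -/
def blowup {V : Type*} (G : SimpleGraph V) (m : ℕ) : SimpleGraph (V × Fin m) where
  Adj u v := G.Adj u.1 v.1
  symm := ⟨fun u v h => G.adj_symm h⟩
  loopless := ⟨fun u h => G.irrefl h⟩

/-- If the `m`-fold blow-up `G'` of `G` admits a perfect `(a,b)`-weighted fractional
`K_r`-tiling, then so does `G` (by averaging the weights of the corresponding rooted
copies of `K_r` in `G'`). -/
theorem stmt6 {V : Type*} [Fintype V] [DecidableEq V] (G : SimpleGraph V)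
    (m r : ℕ) (hm : 0 < m) (a b : ℝ)
    (w' : ((Fin r → V × Fin m) × Fin r) → ℝ)
    (hw' : PerfFracTiling (blowup G m) r a b w') :
    ∃ w : ((Fin r → V) × Fin r) → ℝ, PerfFracTiling G r a b w := by
  classical
  refine ⟨fun K => (m : ℝ)⁻¹ * ∑ g : Fin r → V × Fin m,
      if (fun i => (g i).1) = K.1 then w' (g, K.2) else 0, ?_, ?_, ?_⟩
  · intro K
    refine mul_nonneg (by positivity) (Finset.sum_nonneg fun g _ => ?_)
    split
    · exact hw'.1 _
    · exact le_refl 0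
  · intro K hK
    show (m : ℝ)⁻¹ * _ = 0
    rw [Finset.sum_eq_zero, mul_zero]
    intro g _
    split
    next h =>
      refine hw'.2.1 (g, K.2) fun hg => hK fun i j hij => ?_
      have := hg i j hij
      change G.Adj (g i).1 (g j).1 at this
      rwa [show (g i).1 = K.1 i from congrFun h i, show (g j).1 = K.1 j from congrFun h j] at this
    next => rfl
  · intro v
    -- per (ρ, i) lemma
    have key : ∀ (ρ i : Fin r),
        (∑ f : Fin r → V, if f i = v then
          ((m : ℝ)⁻¹ * ∑ g : Fin r → V × Fin m,
            if (fun j => (g j).1) = f then w' (g, ρ) else 0) * (if i = ρ then a else b) else 0)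
        = ∑ g : Fin r → V × Fin m,
            if (g i).1 = v then (m : ℝ)⁻¹ * (w' (g, ρ) * (if i = ρ then a else b)) else 0 := by
      intro ρ i
      have step1 : ∀ f : Fin r → V,
          (if f i = v then
            ((m : ℝ)⁻¹ * ∑ g : Fin r → V × Fin m,
              if (fun j => (g j).1) = f then w' (g, ρ) else 0) * (if i = ρ then a else b) else 0)
          = ∑ g : Fin r → V × Fin m,
              if (fun j => (g j).1) = f then
                (if f i = v then (m : ℝ)⁻¹ * (w' (g, ρ) * (if i = ρ then a else b)) else 0)
              else 0 := by
        intro f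
        split
        next h =>
          rw [Finset.mul_sum, Finset.sum_mul]
          refine Finset.sum_congr rfl fun g _ => ?_
          split <;> simp [h] <;> ring
        next h =>
          rw [Finset.sum_eq_zero]
          intro g _
          simp [h]
      rw [Finset.sum_congr rfl fun f _ => step1 f, Finset.sum_comm]
      refine Finset.sum_congr rfl fun g _ => ?_
      rw [Finset.sum_ite_eq Finset.univ (fun j => (g j).1)
        (fun f => if f i = v then (m : ℝ)⁻¹ * (w' (g, ρ) * (if i = ρ then a else b)) else 0)]
      simp
    -- transform goal
    rw [Fintype.sum_prod_type]
    have swap1 : (∑ f : Fin r → V, ∑ ρ : Fin r, ∑ i : Fin r,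
        if f i = v then ((m : ℝ)⁻¹ * ∑ g : Fin r → V × Fin m,
            if (fun j => (g j).1) = f then w' (g, ρ) else 0) * (if i = ρ then a else b) else 0)
        = ∑ ρ : Fin r, ∑ i : Fin r, ∑ f : Fin r → V,
        if f i = v then ((m : ℝ)⁻¹ * ∑ g : Fin r → V × Fin m,
            if (fun j => (g j).1) = f then w' (g, ρ) else 0) * (if i = ρ then a else b) else 0 := by
      rw [Finset.sum_comm]
      exact Finset.sum_congr rfl fun ρ _ => Finset.sum_comm
    rw [swap1]
    rw [Finset.sum_congr rfl fun ρ _ => Finset.sum_congr rfl fun i _ => key ρ i]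
    -- now expand over k
    have expand : ∀ (u : V × Fin m) (X : ℝ),
        (if u.1 = v then X else 0) = ∑ k : Fin m, if u = (v, k) then X else 0 := by
      intro u X
      split
      next h =>
        simp [Prod.ext_iff, h]
      next h =>
        rw [Finset.sum_eq_zero]
        intro k _
        simp [Prod.ext_iff, h]
    rw [Finset.sum_congr rfl fun ρ _ => Finset.sum_congr rfl fun i _ =>
      Finset.sum_congr rfl fun g _ =>
        expand (g i) ((m : ℝ)⁻¹ * (w' (g, ρ) * (if i = ρ then a else b)))]
    -- pull sums around: goal ∑ ρ ∑ i ∑ g ∑ k ... = 1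
    set X : Fin r → Fin r → (Fin r → V × Fin m) → Fin m → ℝ := fun ρ i g k =>
      if g i = (v, k) then (m : ℝ)⁻¹ * (w' (g, ρ) * (if i = ρ then a else b)) else 0 with hX
    have rearr : (∑ ρ : Fin r, ∑ i : Fin r, ∑ g : Fin r → V × Fin m, ∑ k : Fin m, X ρ i g k)
        = (m : ℝ)⁻¹ * ∑ k : Fin m, ∑ g : Fin r → V × Fin m, ∑ ρ : Fin r, ∑ i : Fin r,
        if g i = (v, k) then w' (g, ρ) * (if i = ρ then a else b) else 0 := by
      have e1 : (∑ ρ : Fin r, ∑ i : Fin r, ∑ g : Fin r → V × Fin m, ∑ k : Fin m, X ρ i g k)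
          = ∑ ρ : Fin r, ∑ i : Fin r, ∑ k : Fin m, ∑ g : Fin r → V × Fin m, X ρ i g k :=
        Finset.sum_congr rfl fun ρ _ => Finset.sum_congr rfl fun i _ => Finset.sum_comm
      have e2 : (∑ ρ : Fin r, ∑ i : Fin r, ∑ k : Fin m, ∑ g : Fin r → V × Fin m, X ρ i g k)
          = ∑ ρ : Fin r, ∑ k : Fin m, ∑ i : Fin r, ∑ g : Fin r → V × Fin m, X ρ i g k :=
        Finset.sum_congr rfl fun ρ _ => Finset.sum_comm
      have e3 : (∑ ρ : Fin r, ∑ k : Fin m, ∑ i : Fin r, ∑ g : Fin r → V × Fin m, X ρ i g k)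
          = ∑ k : Fin m, ∑ ρ : Fin r, ∑ i : Fin r, ∑ g : Fin r → V × Fin m, X ρ i g k :=
        Finset.sum_comm
      have e4 : (∑ k : Fin m, ∑ ρ : Fin r, ∑ i : Fin r, ∑ g : Fin r → V × Fin m, X ρ i g k)
          = ∑ k : Fin m, ∑ ρ : Fin r, ∑ g : Fin r → V × Fin m, ∑ i : Fin r, X ρ i g k :=
        Finset.sum_congr rfl fun k _ => Finset.sum_congr rfl fun ρ _ => Finset.sum_comm
      have e5 : (∑ k : Fin m, ∑ ρ : Fin r, ∑ g : Fin r → V × Fin m, ∑ i : Fin r, X ρ i g k)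
          = ∑ k : Fin m, ∑ g : Fin r → V × Fin m, ∑ ρ : Fin r, ∑ i : Fin r, X ρ i g k :=
        Finset.sum_congr rfl fun k _ => Finset.sum_comm
      rw [e1, e2, e3, e4, e5, hX]
      simp only [Finset.mul_sum, mul_ite, mul_zero]
    rw [rearr]
    have inner : ∀ k : Fin m, (∑ g : Fin r → V × Fin m, ∑ ρ : Fin r, ∑ i : Fin r,
        if g i = (v, k) then w' (g, ρ) * (if i = ρ then a else b) else 0) = 1 := by
      intro k
      have := hw'.2.2 (v, k)
      rw [Fintype.sum_prod_type] at this
      exact this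
    rw [Finset.sum_congr rfl fun k _ => inner k]
    simp
    field_simp
end

section
/- Let H be a graph on h vertices with χ(H) = r ≥ 3 and gcd(H) = 1. Then there exists a positive integer s such that the complete r-partite graph U(H) with one vertex class of size s·r·h + 1, one vertex class of size s·r·h − 1, and r−2 vertex classes of size s·r·h admits a perfect H-tiling. -/
/-- A function `c : V → Fin r` is a proper colouring of `H` with `r` colours. -/
def ProperCol {V : Type*} {r : ℕ} (H : SimpleGraph V) (c : V → Fin r) : Prop :=
  ∀ u v, H.Adj u v → c u ≠ c v

/-- The family `F` of `m` injective homomorphic copies of `H` in `G` is an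
`H`-tiling: each copy preserves adjacency and the copies are vertex-disjoint. -/
def IsHTiling {VH VG : Type*} (H : SimpleGraph VH) (G : SimpleGraph VG)
    {m : ℕ} (F : Fin m → VH → VG) : Prop :=
  (∀ j u v, H.Adj u v → G.Adj (F j u) (F j v)) ∧
  (∀ j j' u u', F j u = F j' u' → j = j' ∧ u = u')

/-- `G` admits a perfect `H`-tiling: vertex-disjoint copies of `H` covering `V(G)`. -/
def HasPerfectTiling {VH VG : Type*} (H : SimpleGraph VH) (G : SimpleGraph VG) : Prop :=
  ∃ (m : ℕ) (F : Fin m → VH → VG), IsHTiling H G F ∧ ∀ x : VG, ∃ j u, F j u = x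

/-! ### Auxiliary machinery -/

/-- The size of the colour class `i` of the colouring `c`. -/
def ncls {V : Type*} [Fintype V] {r : ℕ} (c : V → Fin r) (i : Fin r) : ℕ :=
  Fintype.card {v // c v = i}

/-- The imbalance vector: `x` at position `0`, `-x` at position `1`, `0` elsewhere. -/
def wgt {r : ℕ} [NeZero r] (x : ℤ) (i : Fin r) : ℤ :=
  if i = 0 then x else if i = 1 then -x else 0

lemma wgt_add {r : ℕ} [NeZero r] (x y : ℤ) (i : Fin r) :
    wgt (x + y) i = wgt x i + wgt y i := by
  unfold wgt; split_ifs <;> ring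

lemma ncls_comp {V : Type*} [Fintype V] {r : ℕ} (c : V → Fin r) (e : Fin r ≃ Fin r)
    (i : Fin r) : ncls (⇑e ∘ c) i = ncls c (e.symm i) := by
  unfold ncls
  exact Fintype.card_congr (Equiv.subtypeEquivRight fun v => by
    simp [Function.comp, Equiv.apply_eq_iff_eq_symm_apply])

lemma sum_ncls {V : Type*} [Fintype V] {r : ℕ} (c : V → Fin r) :
    ∑ i, ncls c i = Fintype.card V := by
  unfold ncls
  rw [← Fintype.card_sigma]
  exact Fintype.card_congr (Equiv.sigmaFiberEquiv c)

lemma sum_shift {r : ℕ} [NeZero r] (f : Fin r → ℤ) (i : Fin r) :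
    ∑ t, f (t + i) = ∑ k, f k :=
  Fintype.sum_equiv (Equiv.addRight i) _ f (fun _ => rfl)

/-- `x` is realisable as the imbalance of a family of proper colourings whose
colour class sums are `K·h + wgt x`. -/
def QRep {VH : Type*} [Fintype VH] (H : SimpleGraph VH) (r h K : ℕ) [NeZero r] (x : ℤ) : Prop :=
  ∃ (M : ℕ) (c : Fin M → VH → Fin r), (∀ j, ProperCol H (c j)) ∧
    ∀ i : Fin r, (∑ j, (ncls (c j) i : ℤ)) = K * h + wgt x i

lemma qadd {VH : Type*} [Fintype VH] {H : SimpleGraph VH} {r h K K' : ℕ} [NeZero r] {x y : ℤ}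
    (h1 : QRep H r h K x) (h2 : QRep H r h K' y) : QRep H r h (K + K') (x + y) := by
  obtain ⟨M, c, hc, hs⟩ := h1
  obtain ⟨M', c', hc', hs'⟩ := h2
  refine ⟨M + M', Fin.append c c', ?_, ?_⟩
  · intro j
    induction j using Fin.addCases with
    | left j => simpa [Fin.append_left] using hc j
    | right j => simpa [Fin.append_right] using hc' j
  · intro i
    rw [Fin.sum_univ_add]
    simp only [Fin.append_left, Fin.append_right]
    rw [hs i, hs' i, wgt_add]
    push_cast; ring

lemma qneg {VH : Type*} [Fintype VH] {H : SimpleGraph VH} {r h K : ℕ} [NeZero r] {x : ℤ}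
    (hr : 3 ≤ r) (h1 : QRep H r h K x) : QRep H r h K (-x) := by
  have h01 : (0 : Fin r) ≠ 1 := by simp [Fin.ext_iff, Fin.val_one']; omega
  obtain ⟨M, c, hc, hs⟩ := h1
  refine ⟨M, fun j => ⇑(Equiv.swap (0 : Fin r) 1) ∘ (c j), ?_, ?_⟩
  · intro j u v huv hEq
    exact hc j u v huv ((Equiv.swap (0 : Fin r) 1).injective hEq)
  · intro i
    have hcomp : ∀ j, ncls (⇑(Equiv.swap (0 : Fin r) 1) ∘ (c j)) i
        = ncls (c j) (Equiv.swap (0 : Fin r) 1 i) := by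
      intro j; rw [ncls_comp]; simp
    simp only [hcomp]
    rw [hs (Equiv.swap (0 : Fin r) 1 i)]
    congr 1
    unfold wgt
    rcases eq_or_ne i 0 with rfl | h0
    · simp [Equiv.swap_apply_left, h01.symm, h01]
    · rcases eq_or_ne i 1 with rfl | h1
      · simp [Equiv.swap_apply_right, h01.symm, h01]
      · rw [Equiv.swap_apply_of_ne_of_ne h0 h1]
        simp [h0, h1]

lemma qbase {VH : Type*} [Fintype VH] {H : SimpleGraph VH} {r h : ℕ} [NeZero r]
    {c : VH → Fin r} (hc : ProperCol H c) (hcard : Fintype.card VH = h) :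
    QRep H r h 1 0 := by
  refine ⟨r, fun t => ⇑(Equiv.addLeft t).symm ∘ c, ?_, ?_⟩
  · intro t u v huv hEq; exact hc u v huv ((Equiv.addLeft t).symm.injective hEq)
  · intro i
    have hterm : ∀ t : Fin r, (ncls (⇑(Equiv.addLeft t).symm ∘ c) i : ℤ)
        = (ncls c (t + i) : ℤ) := by
      intro t; rw [ncls_comp]; simp
    have hsh : ∑ t : Fin r, (ncls c (t + i) : ℤ) = ∑ k, (ncls c k : ℤ) :=
      Fintype.sum_equiv (Equiv.addRight i) _ _ (fun _ => rfl)
    rw [Finset.sum_congr rfl (fun t _ => hterm t), hsh]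
    have : ∑ k, (ncls c k : ℤ) = (h : ℤ) := by
      rw [← Nat.cast_sum, sum_ncls, hcard]
    rw [this]; simp [wgt]

lemma qswap {VH : Type*} [Fintype VH] {H : SimpleGraph VH} {r h : ℕ} [NeZero r]
    (hr : 3 ≤ r) {c : VH → Fin r} (hc : ProperCol H c) (hcard : Fintype.card VH = h) :
    QRep H r h 1 ((ncls c 1 : ℤ) - ncls c 0) := by
  have h01 : (0 : Fin r) ≠ 1 := by simp [Fin.ext_iff, Fin.val_one']; omega
  set f : Fin r → ℤ := fun k => (ncls c k : ℤ) with hf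
  have htot : ∑ k, f k = (h : ℤ) := by rw [hf, ← Nat.cast_sum, sum_ncls, hcard]
  set π : Fin r → (Fin r ≃ Fin r) :=
    fun t => if t = 0 then Equiv.swap 0 1 else Equiv.addLeft t with hπ
  refine ⟨r, fun t => ⇑(π t).symm ∘ c, ?_, ?_⟩
  · intro t u v huv hEq; exact hc u v huv ((π t).symm.injective hEq)
  · intro i
    have hterm : ∀ t : Fin r, (ncls (⇑(π t).symm ∘ c) i : ℤ) = f ((π t) i) := by
      intro t; rw [ncls_comp]; simp [hf]
    rw [Finset.sum_congr rfl (fun t _ => hterm t)]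
    have g0 : π 0 = Equiv.swap 0 1 := if_pos rfl
    have gt : ∀ t : Fin r, t ≠ 0 → (π t) i = t + i := by
      intro t ht; simp [hπ, ht, Equiv.addLeft]
    have e1 : ∑ t, f (π t i) = f (Equiv.swap 0 1 i) + ∑ t ∈ Finset.univ.erase 0, f (t + i) := by
      rw [← Finset.add_sum_erase _ (fun t => f ((π t) i)) (Finset.mem_univ 0), g0]
      exact congrArg _ (Finset.sum_congr rfl fun t ht => by
        rw [gt t (Finset.mem_erase.mp ht).1])
    have e2 : (h : ℤ) = f (0 + i) + ∑ t ∈ Finset.univ.erase 0, f (t + i) := by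
      rw [← htot, ← sum_shift f i,
        ← Finset.add_sum_erase _ (fun t => f (t + i)) (Finset.mem_univ 0)]
    rw [e1]
    have e3 : ∑ t ∈ Finset.univ.erase 0, f (t + i) = (h : ℤ) - f i := by
      rw [e2]; rw [zero_add]; ring
    rw [e3]
    rcases eq_or_ne i 0 with rfl | h0
    · rw [Equiv.swap_apply_left]
      simp only [wgt, if_pos rfl]
      push_cast; ring
    · rcases eq_or_ne i 1 with rfl | h1
      · rw [Equiv.swap_apply_right]
        simp only [wgt, if_neg h01.symm, if_pos rfl]
        push_cast; ring
      · rw [Equiv.swap_apply_of_ne_of_ne h0 h1]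
        simp only [wgt, if_neg h0, if_neg h1]
        push_cast; ring

lemma qgen {VH : Type*} [Fintype VH] {H : SimpleGraph VH} {r h : ℕ} [NeZero r]
    (hr : 3 ≤ r) {c : VH → Fin r} (hc : ProperCol H c) (hcard : Fintype.card VH = h)
    (a b : Fin r) : QRep H r h 1 ((ncls c a : ℤ) - ncls c b) := by
  rcases eq_or_ne a b with rfl | hab
  · simpa using qbase hc hcard
  · have h01 : (0 : Fin r) ≠ 1 := by simp [Fin.ext_iff, Fin.val_one']; omega
    set σ₁ := Equiv.swap (0 : Fin r) b with hσ₁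
    have hs0 : σ₁.symm a ≠ 0 := by
      intro hEq
      apply hab
      have := congrArg σ₁ hEq
      rw [Equiv.apply_symm_apply] at this
      rw [this, hσ₁, Equiv.swap_apply_left]
    set ρ : Fin r ≃ Fin r := (Equiv.swap 1 (σ₁.symm a)).trans σ₁ with hρ
    have hρ1 : ρ 1 = a := by
      rw [hρ]; simp [Equiv.swap_apply_left]
    have hρ0 : ρ 0 = b := by
      rw [hρ]
      simp only [Equiv.trans_apply]
      rw [Equiv.swap_apply_of_ne_of_ne h01 (Ne.symm hs0), hσ₁, Equiv.swap_apply_left]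
    have hq := qswap hr (c := ⇑ρ.symm ∘ c)
      (fun u v huv hEq => hc u v huv (ρ.symm.injective hEq)) hcard
    rw [ncls_comp c ρ.symm 1, ncls_comp c ρ.symm 0, Equiv.symm_symm, hρ1, hρ0] at hq
    exact hq

lemma qiter {VH : Type*} [Fintype VH] {H : SimpleGraph VH} {r h : ℕ} [NeZero r]
    {c₀ : VH → Fin r} (hc : ProperCol H c₀) (hcard : Fintype.card VH = h) :
    ∀ (n : ℕ) {K : ℕ} {x : ℤ}, QRep H r h K x → QRep H r h (K + n) x := by
  intro n
  induction n with
  | zero => intro K x hq; simpa using hq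
  | succ n ih =>
      intro K x hq
      simpa [Nat.add_assoc] using qadd (ih hq) (qbase hc hcard)

theorem tiling_of_sums {VH : Type*} [Fintype VH] {r : ℕ} (H : SimpleGraph VH)
    (szs : Fin r → ℕ) (m : ℕ) (c : Fin m → VH → Fin r)
    (hc : ∀ j, ProperCol H (c j))
    (hsum : ∀ i, ∑ j, ncls (c j) i = szs i) :
    HasPerfectTiling H (SimpleGraph.completeMultipartiteGraph (fun i => Fin (szs i))) := by
  classical
  set g : Fin m × VH → Fin r := fun p => c p.1 p.2 with hg
  have hcardfib : ∀ i, Fintype.card {p // g p = i} = szs i := by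
    intro i
    rw [← hsum i]
    rw [Fintype.card_congr (Equiv.subtypeProdEquivSigmaSubtype (fun j v => c j v = i)),
      Fintype.card_sigma]
    exact Finset.sum_congr rfl fun j _ => (Fintype.card_congr (Equiv.refl _))
  let e : ∀ i, {p // g p = i} ≃ Fin (szs i) := fun i => Fintype.equivFinOfCardEq (hcardfib i)
  let Φ : (Fin m × VH) ≃ Σ i, Fin (szs i) :=
    (Equiv.sigmaFiberEquiv g).symm.trans (Equiv.sigmaCongrRight e)
  have hΦ1 : ∀ p, (Φ p).1 = g p := fun p => rfl
  refine ⟨m, fun j v => Φ (j, v), ⟨?_, ?_⟩, ?_⟩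
  · intro j u v huv
    show (Φ (j, u)).1 ≠ (Φ (j, v)).1
    rw [hΦ1, hΦ1]
    exact hc j u v huv
  · intro j j' u u' hEq
    have := Φ.injective hEq
    exact ⟨congrArg Prod.fst this, congrArg Prod.snd this⟩
  · intro x
    exact ⟨(Φ.symm x).1, (Φ.symm x).2, by simp⟩

/-- Let `H` have `h` vertices, `χ(H) = r ≥ 3` and `gcd(H) = 1` (every natural number
dividing all differences of colour-class sizes of proper `r`-colourings equals `1`).
Then there is a positive integer `s` such that the complete `r`-partite graph with
one class of size `srh + 1`, one of size `srh − 1` and `r − 2` classes of size `srh`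
admits a perfect `H`-tiling. -/
theorem stmt8 {VH : Type*} [Fintype VH] (H : SimpleGraph VH) (r h : ℕ)
    (hr : 3 ≤ r) (hcard : Fintype.card VH = h)
    (hchrom : H.chromaticNumber = (r : ℕ∞))
    (hgcd : ∀ d : ℕ,
      (∀ c : VH → Fin r, ProperCol H c → ∀ i j : Fin r,
        (d : ℤ) ∣ ((Set.ncard {v | c v = i} : ℤ) - (Set.ncard {v | c v = j} : ℤ))) →
      d = 1) :
    ∃ (s : ℕ) (szs : Fin r → ℕ) (i₀ i₁ : Fin r), 0 < s ∧ i₀ ≠ i₁ ∧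
      szs i₀ = s * r * h + 1 ∧ szs i₁ = s * r * h - 1 ∧
      (∀ i, i ≠ i₀ → i ≠ i₁ → szs i = s * r * h) ∧
      HasPerfectTiling H (SimpleGraph.completeMultipartiteGraph (fun i => Fin (szs i))) := by
  classical
  haveI : NeZero r := ⟨by omega⟩
  have h01 : (0 : Fin r) ≠ 1 := by simp [Fin.ext_iff, Fin.val_one']; omega
  have hcol : H.Colorable r := SimpleGraph.chromaticNumber_le_iff_colorable.mp (le_of_eq hchrom)
  obtain ⟨C⟩ := hcol
  have hc₀ : ProperCol H ⇑C := fun u v huv => C.valid huv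
  have hpos : 0 < h := by
    by_contra hh
    have hVH : IsEmpty VH := Fintype.card_eq_zero_iff.mp (by omega)
    have := hgcd 2 (fun c _ i j => by
      rw [Set.eq_empty_of_isEmpty {v | c v = i}, Set.eq_empty_of_isEmpty {v | c v = j}]
      simp)
    omega
  have hnb : ∀ (c : VH → Fin r) (i : Fin r), Set.ncard {v | c v = i} = ncls c i := by
    intro c i
    rw [← Nat.card_coe_set_eq, Nat.card_eq_fintype_card]
    rfl
  set S : Set ℤ := {x | ∃ c : VH → Fin r, ProperCol H c ∧ ∃ i j : Fin r,
    x = (ncls c i : ℤ) - ncls c j} with hS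
  obtain ⟨a, ha⟩ := Int.subgroup_cyclic (AddSubgroup.closure S)
  have hdvd : ∀ x ∈ S, a ∣ x := by
    intro x hx
    have hx' : x ∈ AddSubgroup.closure {a} := ha ▸ AddSubgroup.subset_closure hx
    obtain ⟨n, hn⟩ := AddSubgroup.mem_closure_singleton.mp hx'
    exact ⟨n, by rw [← hn, smul_eq_mul]; ring⟩
  have hna : a.natAbs = 1 := by
    apply hgcd
    intro c hcp i j
    rw [hnb, hnb]
    exact Int.natAbs_dvd.mpr (hdvd _ ⟨c, hcp, i, j, rfl⟩)
  have h1mem : (1 : ℤ) ∈ AddSubgroup.closure S := by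
    have haS : a ∈ AddSubgroup.closure S := by
      rw [ha]; exact AddSubgroup.subset_closure rfl
    rcases Int.natAbs_eq_iff.mp hna with h' | h'
    · simpa [h'] using haS
    · have := neg_mem haS
      rw [h'] at this
      simpa using this
  let T : AddSubgroup ℤ :=
    { carrier := {x | ∃ K, QRep H r h K x}
      zero_mem' := ⟨1, qbase hc₀ hcard⟩
      add_mem' := by rintro x y ⟨K, hK⟩ ⟨K', hK'⟩; exact ⟨K + K', qadd hK hK'⟩
      neg_mem' := by rintro x ⟨K, hK⟩; exact ⟨K, qneg hr hK⟩ }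
  have h1T : (1 : ℤ) ∈ T := by
    refine (AddSubgroup.closure_le T).mpr ?_ h1mem
    rintro x ⟨c, hcp, i, j, rfl⟩
    exact ⟨1, qgen hr hcp hcard i j⟩
  obtain ⟨K, hQ⟩ := h1T
  have hQ' : QRep H r h (K + 1) 1 := by simpa using qadd hQ (qbase hc₀ hcard)
  set s := K + 1 with hs
  have hsle : s ≤ s * r := Nat.le_mul_of_pos_right s (by omega)
  have hQf : QRep H r h (s * r) 1 := by
    have := qiter hc₀ hcard (s * r - s) hQ'
    rwa [show s + (s * r - s) = s * r by omega] at this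
  obtain ⟨M, cc, hcc, hsums⟩ := hQf
  have hsrh : 1 ≤ s * r * h := Nat.mul_pos (Nat.mul_pos (by omega) (by omega)) hpos
  refine ⟨s, fun i => if i = 0 then s*r*h+1 else if i = 1 then s*r*h-1 else s*r*h,
    0, 1, by omega, h01, by simp, by simp [Ne.symm h01], fun i hi0 hi1 => by simp [hi0, hi1], ?_⟩
  apply tiling_of_sums H _ M cc hcc
  intro i
  have hz := hsums i
  rw [← Nat.cast_sum] at hz
  have hcast : ((∑ j, ncls (cc j) i : ℕ) : ℤ)
      = ((if i = 0 then s*r*h+1 else if i = 1 then s*r*h-1 else s*r*h : ℕ) : ℤ) := by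
    rw [hz]
    rcases eq_or_ne i 0 with rfl | hi0
    · simp only [wgt, if_pos rfl]; push_cast; ring
    · rcases eq_or_ne i 1 with rfl | hi1
      · rw [if_neg (Ne.symm h01), if_pos rfl, Nat.cast_sub hsrh]
        have w1 : wgt 1 (1 : Fin r) = -1 := by simp [wgt, Ne.symm h01]
        rw [w1]; push_cast; ring
      · simp only [wgt, if_neg hi0, if_neg hi1]; push_cast; ring
  exact_mod_cast hcast
end

section
/- Let G = G((n_{ij}), r) be the row-column construction and H a graph with χ(H) = r. Then for any copy H' of H in G and any rows j, j', the difference |V(H') ∩ V^j| − |V(H') ∩ V^{j'}| is divisible by gcd(H). Consequently, for any H-tiling T of G, gcd(H) divides |V(T) ∩ V^j| − |V(T) ∩ V^{j'}|; in particular if gcd(H) > 1 and |V^1| − |V^2| = 1 then G admits no perfect H-tiling. -/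
/-- The row-column construction `G((n_{ij}), r)`. -/
def rcGraph (r : ℕ) (nij : Fin r → Fin r → ℕ) :
    SimpleGraph (Σ i : Fin r, Σ j : Fin r, Fin (nij i j)) where
  Adj u v := u.1 ≠ v.1 ∧ u.2.1 ≠ v.2.1
  symm := ⟨fun u v h => ⟨h.1.symm, h.2.symm⟩⟩
  loopless := ⟨fun u h => h.1 rfl⟩

/-- Let `χ(H) = r` and let `g` divide every difference of colour-class sizes over
proper `r`-colourings of `H` (as `gcd(H)` does).  Then in `G = G((n_{ij}), r)`:
(1) for any copy `H'` of `H` and rows `j, j'`, `g` divides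
`|V(H') ∩ V^j| − |V(H') ∩ V^{j'}|`; (2) the same holds for the union of any
`H`-tiling; (3) if `g > 1` and `|V^1| − |V^2| = 1` then `G` has no perfect
`H`-tiling. -/
theorem stmt11 {VH : Type*} [Fintype VH] (H : SimpleGraph VH) (r : ℕ)
    (hr : 1 ≤ r) (hchrom : H.chromaticNumber = (r : ℕ∞))
    (nij : Fin r → Fin r → ℕ) (g : ℕ)
    (hg : ∀ c : VH → Fin r, ProperCol H c → ∀ i j : Fin r,
      (g : ℤ) ∣ ((Set.ncard {v | c v = i} : ℤ) - (Set.ncard {v | c v = j} : ℤ))) :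
    (∀ f : VH → (Σ i : Fin r, Σ j : Fin r, Fin (nij i j)),
      Function.Injective f →
      (∀ u v, H.Adj u v → (rcGraph r nij).Adj (f u) (f v)) →
      ∀ j j' : Fin r,
        (g : ℤ) ∣ ((Set.ncard {u : VH | (f u).2.1 = j} : ℤ) -
          (Set.ncard {u : VH | (f u).2.1 = j'} : ℤ))) ∧
    (∀ (m : ℕ) (F : Fin m → VH → (Σ i : Fin r, Σ j : Fin r, Fin (nij i j))),
      IsHTiling H (rcGraph r nij) F →
      ∀ j j' : Fin r,
        (g : ℤ) ∣ ((Set.ncard {x : (Σ i : Fin r, Σ j : Fin r, Fin (nij i j)) |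
            (∃ p u, F p u = x) ∧ x.2.1 = j} : ℤ) -
          (Set.ncard {x : (Σ i : Fin r, Σ j : Fin r, Fin (nij i j)) |
            (∃ p u, F p u = x) ∧ x.2.1 = j'} : ℤ))) ∧
    (∀ j₁ j₂ : Fin r, 1 < g →
      (∑ i : Fin r, nij i j₁) = (∑ i : Fin r, nij i j₂) + 1 →
      ¬ HasPerfectTiling H (rcGraph r nij)) := by
  classical
  have part1 : ∀ f : VH → (Σ i : Fin r, Σ j : Fin r, Fin (nij i j)),
      (∀ u v, H.Adj u v → (rcGraph r nij).Adj (f u) (f v)) →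
      ∀ j j' : Fin r,
        (g : ℤ) ∣ ((Set.ncard {u : VH | (f u).2.1 = j} : ℤ) -
          (Set.ncard {u : VH | (f u).2.1 = j'} : ℤ)) := by
    intro f hf j j'
    exact hg (fun v => (f v).2.1) (fun u v h => (hf u v h).2) j j'
  have count : ∀ (m : ℕ) (F : Fin m → VH → (Σ i : Fin r, Σ j : Fin r, Fin (nij i j))),
      IsHTiling H (rcGraph r nij) F → ∀ j : Fin r,
      (Set.ncard {x : (Σ i : Fin r, Σ j : Fin r, Fin (nij i j)) |
          (∃ p u, F p u = x) ∧ x.2.1 = j})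
        = ∑ p, Set.ncard {u : VH | (F p u).2.1 = j} := by
    intro m F hT j
    have hset : {x : (Σ i : Fin r, Σ j : Fin r, Fin (nij i j)) |
        (∃ p u, F p u = x) ∧ x.2.1 = j}
        = ↑(Finset.univ.biUnion fun p =>
            (Finset.univ.filter fun u => (F p u).2.1 = j).image (F p)) := by
      ext x
      constructor
      · rintro ⟨⟨p, u, rfl⟩, hj⟩
        exact Finset.mem_coe.2 (Finset.mem_biUnion.2 ⟨p, Finset.mem_univ p,
          Finset.mem_image.2 ⟨u, Finset.mem_filter.2 ⟨Finset.mem_univ u, hj⟩, rfl⟩⟩)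
      · intro hx
        obtain ⟨p, -, hx⟩ := Finset.mem_biUnion.1 (Finset.mem_coe.1 hx)
        obtain ⟨u, hu, rfl⟩ := Finset.mem_image.1 hx
        exact ⟨⟨p, u, rfl⟩, (Finset.mem_filter.1 hu).2⟩
    rw [hset, Set.ncard_coe_finset, Finset.card_biUnion]
    · refine Finset.sum_congr rfl fun p _ => ?_
      rw [Finset.card_image_of_injective _ (fun u u' h => (hT.2 p p u u' h).2),
        Set.ncard_eq_toFinset_card', Set.toFinset_setOf]
    · intro p _ q _ hpq
      simp only [Finset.disjoint_left, Finset.mem_image]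
      rintro x ⟨u, _, rfl⟩ ⟨u', _, h⟩
      exact hpq (hT.2 q p u' u h).1.symm
  have part2 : ∀ (m : ℕ) (F : Fin m → VH → (Σ i : Fin r, Σ j : Fin r, Fin (nij i j))),
      IsHTiling H (rcGraph r nij) F →
      ∀ j j' : Fin r,
        (g : ℤ) ∣ ((Set.ncard {x : (Σ i : Fin r, Σ j : Fin r, Fin (nij i j)) |
            (∃ p u, F p u = x) ∧ x.2.1 = j} : ℤ) -
          (Set.ncard {x : (Σ i : Fin r, Σ j : Fin r, Fin (nij i j)) |
            (∃ p u, F p u = x) ∧ x.2.1 = j'} : ℤ)) := by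
    intro m F hT j j'
    rw [count m F hT j, count m F hT j']
    push_cast
    rw [← Finset.sum_sub_distrib]
    exact Finset.dvd_sum fun p _ => part1 (F p) (hT.1 p) j j'
  refine ⟨fun f _ hf => part1 f hf, part2, ?_⟩
  rintro j₁ j₂ hg1 hsum ⟨m, F, hT, hcov⟩
  have hfull : ∀ j : Fin r, {x : (Σ i : Fin r, Σ j : Fin r, Fin (nij i j)) |
      (∃ p u, F p u = x) ∧ x.2.1 = j} = {x | x.2.1 = j} := by
    intro j
    ext x
    simp only [Set.mem_setOf_eq, and_iff_right_iff_imp]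
    exact fun _ => hcov x
  have hcard : ∀ j : Fin r,
      Set.ncard {x : (Σ i : Fin r, Σ j' : Fin r, Fin (nij i j')) | x.2.1 = j}
        = ∑ i, nij i j := by
    intro j
    rw [← Nat.card_coe_set_eq]
    have e : {x : (Σ i : Fin r, Σ j' : Fin r, Fin (nij i j')) // x.2.1 = j}
        ≃ Σ i : Fin r, Fin (nij i j) :=
      { toFun := fun x => ⟨x.1.1, Fin.cast (by rw [x.2]) x.1.2.2⟩
        invFun := fun y => ⟨⟨y.1, j, y.2⟩, rfl⟩
        left_inv := by
          rintro ⟨⟨i, j', v⟩, h⟩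
          simp only at h
          subst h
          rfl
        right_inv := fun y => rfl }
    exact (Nat.card_congr e).trans (by simp [Nat.card_eq_fintype_card])
  have h1 := part2 m F hT j₁ j₂
  rw [hfull j₁, hfull j₂, hcard j₁, hcard j₂, hsum] at h1
  have hone : (g : ℤ) ∣ 1 := by
    have : ((∑ i, nij i j₂ : ℕ) + 1 : ℤ) - (∑ i, nij i j₂ : ℕ) = 1 := by ring
    rwa [Nat.cast_add, Nat.cast_one, this] at h1
  have := Int.le_of_dvd one_pos hone
  omega
end

section
/- Let H be a graph on h vertices with χ(H) = r ≥ 3 and σ := σ(H). For each n, the construction G with n_{i1} := ⌈σn⌉ − 1 for all i and the remaining n_{i2}, ..., n_{ir} as equal as possible with Σ_j n_{ij} = n satisfies δ*(G) ≥ (1 − 1/χ_cr(H))·n − 1, and every H-tiling of G has size strictly less than rn/h; in particular G has no perfect H-tiling. -/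
/-- `σ(H)`: the minimum, over proper `r`-colourings `c` of `H` and colour classes,
of the ratio (size of colour class)/(number of vertices). -/
noncomputable def sigmaH (V : Type*) [Fintype V] (H : SimpleGraph V) (r : ℕ) : ℝ :=
  sInf { x : ℝ | ∃ c : V → Fin r, ProperCol H c ∧
    ∃ i : Fin r, x = (Set.ncard {v | c v = i} : ℝ) / (Fintype.card V : ℝ) }

lemma card_block {r : ℕ} (nij : Fin r → Fin r → ℕ) (p : Fin r → Fin r → Prop)
    [∀ i j, Decidable (p i j)] :
    Set.ncard {v : Σ i : Fin r, Σ j : Fin r, Fin (nij i j) | p v.1 v.2.1} =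
      ∑ i : Fin r, ∑ j : Fin r, if p i j then nij i j else 0 := by
  classical
  rw [← Nat.card_coe_set_eq, Nat.card_eq_fintype_card, Fintype.card_subtype]
  rw [Finset.card_filter]
  rw [← Finset.univ_sigma_univ, Finset.sum_sigma]
  refine Finset.sum_congr rfl fun i _ => ?_
  rw [← Finset.univ_sigma_univ, Finset.sum_sigma]
  refine Finset.sum_congr rfl fun j _ => ?_
  by_cases hp : p i j <;> simp [hp]

lemma ncard_eq_card_subtype {α : Type*} (p : α → Prop) [Fintype {x // p x}] :
    Set.ncard {x | p x} = Fintype.card {x // p x} := by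
  rw [← Nat.card_coe_set_eq]
  exact Nat.card_eq_fintype_card (α := {x // p x})

set_option maxHeartbeats 1600000 in
/-- The `gcd(H) = 1` lower-bound construction: `H` has `h` vertices, `χ(H) = r ≥ 3`,
`σ := σ(H)`, `t = ⌈σn⌉`.  Take `n_{i j₀} = t − 1` in the distinguished row `j₀` for
every column `i`, row sums `n`, and the remaining entries in each column as equal
as possible.  Then the construction has multipartite minimum degree at least
`(1 − 1/χ_cr(H))·n − 1 = (1 − (1−σ)/(r−1))·n − 1`, every `H`-tiling has fewer than
`rn/h` copies, and in particular there is no perfect `H`-tiling. -/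
theorem stmt12 {VH : Type*} [Fintype VH] (H : SimpleGraph VH) (r h n : ℕ)
    (hr : 3 ≤ r) (hn : 0 < n) (hcard : Fintype.card VH = h)
    (hchrom : H.chromaticNumber = (r : ℕ∞))
    (t : ℕ) (ht : (t : ℤ) = ⌈sigmaH VH H r * (n : ℝ)⌉) (ht1 : 1 ≤ t)
    (j₀ : Fin r) (nij : Fin r → Fin r → ℕ)
    (hrow : ∀ i : Fin r, nij i j₀ = t - 1)
    (hsum : ∀ i : Fin r, ∑ j : Fin r, nij i j = n)
    (hbal : ∀ (i : Fin r) (j j' : Fin r), j ≠ j₀ → j' ≠ j₀ → nij i j ≤ nij i j' + 1) :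
    (∀ u : (Σ i : Fin r, Σ j : Fin r, Fin (nij i j)), ∀ i' : Fin r, i' ≠ u.1 →
      (1 - (1 - sigmaH VH H r) / ((r : ℝ) - 1)) * n - 1 ≤
        (Set.ncard {v : (Σ i : Fin r, Σ j : Fin r, Fin (nij i j)) |
          (rcGraph r nij).Adj u v ∧ v.1 = i'} : ℝ)) ∧
    (∀ (m : ℕ) (F : Fin m → VH → (Σ i : Fin r, Σ j : Fin r, Fin (nij i j))),
      IsHTiling H (rcGraph r nij) F → (m : ℝ) < (r : ℝ) * n / h) ∧
    ¬ HasPerfectTiling H (rcGraph r nij) := by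
  classical
  set σ := sigmaH VH H r with hσdef
  set S := { x : ℝ | ∃ c : VH → Fin r, ProperCol H c ∧
    ∃ i : Fin r, x = (Set.ncard {v | c v = i} : ℝ) / (Fintype.card VH : ℝ) } with hSdef
  -- a proper colouring exists
  have hcol : ∃ c : VH → Fin r, ProperCol H c := by
    have hc : H.Colorable r :=
      SimpleGraph.chromaticNumber_le_iff_colorable.mp (le_of_eq hchrom)
    obtain ⟨C⟩ := hc
    exact ⟨C, fun u v huv => C.valid huv⟩
  obtain ⟨c₀, hc₀⟩ := hcol
  -- H is nonempty
  have hh1 : 1 ≤ h := by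
    by_contra hcon
    have h0 : Fintype.card VH = 0 := by omega
    haveI : IsEmpty VH := Fintype.card_eq_zero_iff.mp h0
    have hc0 : H.Colorable 0 :=
      ⟨SimpleGraph.Coloring.mk (fun v => isEmptyElim v) (fun {u v} _ => isEmptyElim u)⟩
    have hle := hc0.chromaticNumber_le
    rw [hchrom] at hle
    have : r ≤ 0 := by exact_mod_cast hle
    omega
  have hhR : (0:ℝ) < h := by exact_mod_cast hh1
  have hrR : (3:ℝ) ≤ (r:ℝ) := by exact_mod_cast hr
  have hr1 : (0:ℝ) < (r:ℝ) - 1 := by linarith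
  have hr0 : 0 < r := by omega
  have hnR : (0:ℝ) ≤ (n:ℝ) := by positivity
  -- every colour class of a proper colouring is nonempty
  have hclassne : ∀ c : VH → Fin r, ProperCol H c → ∀ i : Fin r,
      {v | c v = i}.Nonempty := by
    intro c hc i
    by_contra hemp
    rw [Set.not_nonempty_iff_eq_empty] at hemp
    have hne : ∀ v, c v ≠ i := by
      intro v hv
      have hmem : v ∈ {v | c v = i} := hv
      rw [hemp] at hmem
      exact hmem
    have C' : H.Coloring {x : Fin r // x ≠ i} :=
      SimpleGraph.Coloring.mk (fun v => ⟨c v, hne v⟩)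
        (fun {u v} hadj hEq => hc u v hadj (congrArg Subtype.val hEq))
    have hcol2 : H.Colorable (Fintype.card {x : Fin r // x ≠ i}) := C'.colorable
    have hcardsub : Fintype.card {x : Fin r // x ≠ i} = r - 1 := by
      have hcc := Fintype.card_subtype_compl (fun x : Fin r => x = i)
      simpa [Fintype.card_subtype_eq] using hcc
    rw [hcardsub] at hcol2
    have hle := hcol2.chromaticNumber_le
    rw [hchrom] at hle
    have : r ≤ r - 1 := by exact_mod_cast hle
    omega
  -- sInf facts
  have hSne : S.Nonempty := ⟨_, c₀, hc₀, ⟨0, hr0⟩, rfl⟩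
  have hbdd : BddBelow S := by
    refine ⟨0, fun x hx => ?_⟩
    obtain ⟨c, hc, i, rfl⟩ := hx
    positivity
  have hσpos : 0 < σ := by
    have hlb : ∀ x ∈ S, 1/(h:ℝ) ≤ x := by
      rintro x ⟨c, hc, i, rfl⟩
      rw [hcard]
      have h1 : 1 ≤ ({v | c v = i}).ncard := by
        rw [Nat.one_le_iff_ne_zero, ← Nat.pos_iff_ne_zero, Set.ncard_pos (Set.toFinite _)]
        exact hclassne c hc i
      have h1R : (1:ℝ) ≤ (({v | c v = i}).ncard : ℝ) := by exact_mod_cast h1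
      exact (div_le_div_iff_of_pos_right hhR).mpr h1R
    calc (0:ℝ) < 1/(h:ℝ) := by positivity
      _ ≤ σ := le_csInf hSne hlb
  -- the colour classes sum to h
  have hclass_sum : ∀ c : VH → Fin r, ∑ i : Fin r, ({v | c v = i}).ncard = h := by
    intro c
    have e1 : ∀ i : Fin r, ({v | c v = i}).ncard = Fintype.card {v // c v = i} :=
      fun i => ncard_eq_card_subtype _
    calc ∑ i : Fin r, ({v | c v = i}).ncard
        = ∑ i : Fin r, Fintype.card {v // c v = i} :=
          Finset.sum_congr rfl fun i _ => e1 i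
      _ = Fintype.card (Σ i : Fin r, {v // c v = i}) := (Fintype.card_sigma).symm
      _ = Fintype.card VH := Fintype.card_congr (Equiv.sigmaFiberEquiv c)
      _ = h := hcard
  -- σ * r ≤ 1
  have hσr : σ * r ≤ 1 := by
    obtain ⟨i, hi⟩ : ∃ i : Fin r, r * ({v | c₀ v = i}).ncard ≤ h := by
      by_contra hcon
      push_neg at hcon
      have hsum' : ∑ i : Fin r, (h + 1) ≤ ∑ i : Fin r, r * ({v | c₀ v = i}).ncard :=
        Finset.sum_le_sum fun i _ => hcon i
      rw [← Finset.mul_sum, hclass_sum c₀, Finset.sum_const, Finset.card_univ,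
        Fintype.card_fin, smul_eq_mul] at hsum'
      have : h + 1 ≤ h := Nat.le_of_mul_le_mul_left hsum' hr0
      omega
    have hmem : (({v | c₀ v = i}).ncard : ℝ) / (Fintype.card VH : ℝ) ∈ S :=
      ⟨c₀, hc₀, i, rfl⟩
    have hσle : σ ≤ (({v | c₀ v = i}).ncard : ℝ) / (h : ℝ) := by
      have := csInf_le hbdd hmem
      rwa [hcard] at this
    have hiR : (r:ℝ) * (({v | c₀ v = i}).ncard : ℝ) ≤ (h:ℝ) := by exact_mod_cast hi
    have h2 : σ * r ≤ ((({v | c₀ v = i}).ncard : ℝ) / (h : ℝ)) * r := by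
      apply mul_le_mul_of_nonneg_right hσle
      linarith
    have h3 : ((({v | c₀ v = i}).ncard : ℝ) / (h : ℝ)) * r ≤ 1 := by
      rw [div_mul_eq_mul_div, div_le_one hhR]
      linarith
    linarith
  -- ceiling facts
  have htR : (t:ℝ) = ((⌈σ * (n:ℝ)⌉ : ℤ) : ℝ) := by exact_mod_cast ht
  have hσt : σ * n ≤ (t:ℝ) := by rw [htR]; exact Int.le_ceil _
  have htub : (t:ℝ) < σ * n + 1 := by rw [htR]; exact Int.ceil_lt_add_one _
  have htcast : ((t - 1 : ℕ) : ℝ) = (t:ℝ) - 1 := by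
    push_cast [Nat.cast_sub ht1]; ring
  -- the relative crossing density
  set D := (1 - σ) / ((r:ℝ) - 1) with hDdef
  have eD : D * ((r:ℝ) - 1) = 1 - σ := div_mul_cancel₀ _ (ne_of_gt hr1)
  ------------------------------------------------------------------
  -- Part 1 : degree bound
  ------------------------------------------------------------------
  have part1 : ∀ u : (Σ i : Fin r, Σ j : Fin r, Fin (nij i j)), ∀ i' : Fin r, i' ≠ u.1 →
      (1 - (1 - σ) / ((r : ℝ) - 1)) * n - 1 ≤
        (Set.ncard {v : (Σ i : Fin r, Σ j : Fin r, Fin (nij i j)) |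
          (rcGraph r nij).Adj u v ∧ v.1 = i'} : ℝ) := by
    intro u i' hi'
    set j₁ := u.2.1 with hj₁def
    have hadj : ∀ v : (Σ i : Fin r, Σ j : Fin r, Fin (nij i j)),
        (rcGraph r nij).Adj u v ↔ (u.1 ≠ v.1 ∧ u.2.1 ≠ v.2.1) := fun v => Iff.rfl
    have hset : {v : (Σ i : Fin r, Σ j : Fin r, Fin (nij i j)) |
        (rcGraph r nij).Adj u v ∧ v.1 = i'} =
        {v : (Σ i : Fin r, Σ j : Fin r, Fin (nij i j)) | v.1 = i' ∧ v.2.1 ≠ j₁} := by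
      ext v
      simp only [Set.mem_setOf_eq, hadj]
      constructor
      · rintro ⟨⟨-, h2⟩, h3⟩
        exact ⟨h3, fun hh => h2 hh.symm⟩
      · rintro ⟨h1, h2⟩
        exact ⟨⟨fun hh => hi' (by rw [← h1, hh]), fun hh => h2 hh.symm⟩, h1⟩
    have hcb := card_block nij (fun i j => i = i' ∧ j ≠ j₁)
    have hstep : ∀ i : Fin r, (∑ j : Fin r, if (i = i' ∧ j ≠ j₁) then nij i j else 0)
        = if i = i' then (∑ j : Fin r, if j ≠ j₁ then nij i j else 0) else 0 := by
      intro i; by_cases hi : i = i' <;> simp [hi]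
    have hcb2 : Set.ncard {v : (Σ i : Fin r, Σ j : Fin r, Fin (nij i j)) |
        v.1 = i' ∧ v.2.1 ≠ j₁} = ∑ j : Fin r, if j ≠ j₁ then nij i' j else 0 := by
      rw [hcb, Finset.sum_congr rfl fun i _ => hstep i, Finset.sum_ite_eq' Finset.univ i']
      simp
    have hkey : (∑ j : Fin r, if j ≠ j₁ then nij i' j else 0) + nij i' j₁ = n := by
      have e2 : ∀ j : Fin r,
          (if j ≠ j₁ then nij i' j else 0) + (if j = j₁ then nij i' j else 0) = nij i' j := by
        intro j; by_cases hj : j = j₁ <;> simp [hj]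
      calc (∑ j : Fin r, if j ≠ j₁ then nij i' j else 0) + nij i' j₁
          = (∑ j : Fin r, if j ≠ j₁ then nij i' j else 0)
            + (∑ j : Fin r, if j = j₁ then nij i' j else 0) := by
            rw [Finset.sum_ite_eq' Finset.univ j₁]; simp
        _ = ∑ j : Fin r, nij i' j := by
            rw [← Finset.sum_add_distrib]; exact Finset.sum_congr rfl fun j _ => e2 j
        _ = n := hsum i'
    set q := nij i' j₁ with hqdef
    have hkey2 : (Set.ncard {v : (Σ i : Fin r, Σ j : Fin r, Fin (nij i j)) |
        (rcGraph r nij).Adj u v ∧ v.1 = i'}) + q = n := by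
      rw [hset, hcb2]; exact hkey
    have hcountR : ((Set.ncard {v : (Σ i : Fin r, Σ j : Fin r, Fin (nij i j)) |
        (rcGraph r nij).Adj u v ∧ v.1 = i'}) : ℝ) = (n:ℝ) - (q:ℝ) := by
      have := congrArg (fun k : ℕ => (k:ℝ)) hkey2
      push_cast at this
      linarith
    have hq' : (q:ℝ) ≤ D * n + 1 := by
      by_cases hj : j₁ = j₀
      · have hqt : q = t - 1 := by rw [hqdef, hj, hrow]
        have hqR : (q:ℝ) = (t:ℝ) - 1 := by rw [hqt]; exact htcast
        have hσD : σ ≤ D := by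
          rw [hDdef, le_div_iff₀ hr1]
          nlinarith
        have hσn : σ * n ≤ D * n := mul_le_mul_of_nonneg_right hσD hnR
        rw [hqR]; linarith
      · -- the balanced case
        set s := Finset.univ.erase j₀ with hsdef
        have hj₁s : j₁ ∈ s := Finset.mem_erase.mpr ⟨hj, Finset.mem_univ _⟩
        have hA : nij i' j₀ + ∑ j ∈ s, nij i' j = n := by
          rw [Finset.add_sum_erase _ _ (Finset.mem_univ j₀)]; exact hsum i'
        have hB : q + ∑ j ∈ s.erase j₁, nij i' j = ∑ j ∈ s, nij i' j :=
          Finset.add_sum_erase _ _ hj₁s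
        have hcard2 : (s.erase j₁).card = r - 2 := by
          rw [Finset.card_erase_of_mem hj₁s, hsdef,
            Finset.card_erase_of_mem (Finset.mem_univ _), Finset.card_univ, Fintype.card_fin]
          omega
        have hbound : ∀ j ∈ s.erase j₁, q ≤ nij i' j + 1 := by
          intro j hjmem
          have hjs : j ∈ s := Finset.mem_of_mem_erase hjmem
          exact hbal i' j₁ j hj (Finset.mem_erase.mp hjs).1
        have hsum_le : ∑ _j ∈ s.erase j₁, q ≤ ∑ j ∈ s.erase j₁, (nij i' j + 1) :=
          Finset.sum_le_sum hbound
        rw [Finset.sum_const, hcard2, smul_eq_mul, Finset.sum_add_distrib,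
          Finset.sum_const, hcard2, smul_eq_mul, mul_one] at hsum_le
        -- (r-2) * q ≤ B + (r-2) where B = ∑_{s.erase j₁} nij i' j
        set B := ∑ j ∈ s.erase j₁, nij i' j with hBdef
        have hr2cast : ((r - 2 : ℕ) : ℝ) = (r:ℝ) - 2 := by
          push_cast [Nat.cast_sub (by omega : 2 ≤ r)]; ring
        have hc1 : ((r:ℝ) - 2) * (q:ℝ) ≤ (B:ℝ) + ((r:ℝ) - 2) := by
          have := (Nat.cast_le (α := ℝ)).mpr hsum_le
          push_cast at this
          rw [hr2cast] at this
          linarith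
        have hc2 : ((t:ℝ) - 1) + ((q:ℝ) + (B:ℝ)) = (n:ℝ) := by
          have hA' : (t - 1 : ℕ) + ((q:ℕ) + B) = n := by
            rw [hrow i', ← hB] at hA
            omega
          have := (Nat.cast_inj (R := ℝ)).mpr hA'
          push_cast at this
          rw [htcast] at this
          linarith
        -- conclude q ≤ D n + 1
        have h2 : ((r:ℝ) - 1) * q ≤ ((r:ℝ) - 1) * (D * n + 1) := by
          have expand : ((r:ℝ) - 1) * (D * n + 1) = (D * ((r:ℝ) - 1)) * n + ((r:ℝ) - 1) := by
            ring
          rw [expand, eD]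
          nlinarith [hc1, hc2, hσt]
        exact le_of_mul_le_mul_left h2 hr1
    rw [hcountR]
    nlinarith [hq']
  ------------------------------------------------------------------
  -- Part 2 : every tiling is small
  ------------------------------------------------------------------
  have part2 : ∀ (m : ℕ) (F : Fin m → VH → (Σ i : Fin r, Σ j : Fin r, Fin (nij i j))),
      IsHTiling H (rcGraph r nij) F → (m : ℝ) < (r : ℝ) * n / h := by
    intro m F hF
    obtain ⟨hhom, hinj⟩ := hF
    have hcj : ∀ j : Fin m, ProperCol H (fun u => (F j u).2.1) := by
      intro j u v huv
      exact (hhom j u v huv).2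
    have hclassσ : ∀ j : Fin m,
        σ * h ≤ (({u : VH | (F j u).2.1 = j₀}).ncard : ℝ) := by
      intro j
      have hmem : (({u : VH | (F j u).2.1 = j₀}).ncard : ℝ) / (Fintype.card VH : ℝ) ∈ S :=
        ⟨fun u => (F j u).2.1, hcj j, j₀, rfl⟩
      have hle := csInf_le hbdd hmem
      rw [hcard] at hle
      exact (le_div_iff₀ hhR).mp hle
    -- injection into the j₀-row
    have hcount : ∑ j : Fin m, ({u : VH | (F j u).2.1 = j₀}).ncard ≤ r * (t - 1) := by
      set φ : (Σ j : Fin m, {u : VH // (F j u).2.1 = j₀}) →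
          {v : (Σ i : Fin r, Σ j : Fin r, Fin (nij i j)) // v.2.1 = j₀} :=
        fun p => ⟨F p.1 p.2.1, p.2.2⟩ with hφdef
      have hφ : Function.Injective φ := by
        rintro ⟨j, u, hu⟩ ⟨j', u', hu'⟩ hab
        have hFF : F j u = F j' u' := congrArg Subtype.val hab
        obtain ⟨h1, h2⟩ := hinj j j' u u' hFF
        subst h1; subst h2; rfl
      have hle := Nat.card_le_card_of_injective φ hφ
      rw [Nat.card_eq_fintype_card, Nat.card_eq_fintype_card, Fintype.card_sigma] at hle
      have hfib : ∀ j : Fin m, Fintype.card {u : VH // (F j u).2.1 = j₀}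
          = ({u : VH | (F j u).2.1 = j₀}).ncard := by
        intro j
        exact (ncard_eq_card_subtype _).symm
      have hrow_card : Fintype.card
          {v : (Σ i : Fin r, Σ j : Fin r, Fin (nij i j)) // v.2.1 = j₀} = r * (t - 1) := by
        have h1 : Fintype.card {v : (Σ i : Fin r, Σ j : Fin r, Fin (nij i j)) // v.2.1 = j₀}
            = ({v : (Σ i : Fin r, Σ j : Fin r, Fin (nij i j)) | v.2.1 = j₀}).ncard :=
          (ncard_eq_card_subtype _).symm
        rw [h1, card_block nij (fun _ j => j = j₀)]
        have : ∀ i : Fin r, (∑ j : Fin r, if j = j₀ then nij i j else 0) = t - 1 := by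
          intro i
          rw [Finset.sum_ite_eq' Finset.univ j₀]
          simp [hrow]
        rw [Finset.sum_congr rfl fun i _ => this i, Finset.sum_const, Finset.card_univ,
          Fintype.card_fin, smul_eq_mul]
      rw [hrow_card] at hle
      calc ∑ j : Fin m, ({u : VH | (F j u).2.1 = j₀}).ncard
          = ∑ j : Fin m, Fintype.card {u : VH // (F j u).2.1 = j₀} :=
            Finset.sum_congr rfl fun j _ => (hfib j).symm
        _ ≤ r * (t - 1) := hle
    -- put it together over ℝ
    have hsum_lb : (m:ℝ) * (σ * h) ≤
        ∑ j : Fin m, (({u : VH | (F j u).2.1 = j₀}).ncard : ℝ) := by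
      calc (m:ℝ) * (σ * h) = ∑ _j : Fin m, σ * h := by
            rw [Finset.sum_const, Finset.card_univ, Fintype.card_fin, nsmul_eq_mul]
        _ ≤ _ := Finset.sum_le_sum fun j _ => hclassσ j
    have hsum_ub : (∑ j : Fin m, (({u : VH | (F j u).2.1 = j₀}).ncard : ℝ))
        ≤ (r:ℝ) * ((t:ℝ) - 1) := by
      have hcast := (Nat.cast_le (α := ℝ)).mpr hcount
      rw [Nat.cast_sum, Nat.cast_mul, htcast] at hcast
      exact hcast
    have hstrict : (m:ℝ) * (σ * h) < (r:ℝ) * (σ * n) := by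
      have h4 : (r:ℝ) * ((t:ℝ) - 1) < (r:ℝ) * (σ * n) := by
        apply mul_lt_mul_of_pos_left _ (by linarith : (0:ℝ) < r)
        linarith
      linarith
    have hmh : (m:ℝ) * h < (r:ℝ) * n := by
      nlinarith [hstrict, hσpos]
    rw [lt_div_iff₀ hhR]
    exact hmh
  refine ⟨part1, part2, ?_⟩
  ------------------------------------------------------------------
  -- Part 3 : no perfect tiling
  ------------------------------------------------------------------
  rintro ⟨m, F, hF, hcov⟩
  have hm := part2 m F hF
  have hbij : Function.Bijective (fun p : Fin m × VH => F p.1 p.2) := by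
    constructor
    · rintro ⟨j, u⟩ ⟨j', u'⟩ hEq
      obtain ⟨h1, h2⟩ := hF.2 j j' u u' hEq
      simp [h1, h2]
    · intro x
      obtain ⟨j, u, hju⟩ := hcov x
      exact ⟨⟨j, u⟩, hju⟩
  have hcards : m * h = r * n := by
    have h1 : Nat.card (Fin m × VH) =
        Nat.card (Σ i : Fin r, Σ j : Fin r, Fin (nij i j)) :=
      Nat.card_eq_of_bijective _ hbij
    have h2 : Nat.card (Fin m × VH) = m * h := by
      rw [Nat.card_eq_fintype_card, Fintype.card_prod, Fintype.card_fin, hcard]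
    have h3 : Nat.card (Σ i : Fin r, Σ j : Fin r, Fin (nij i j)) = r * n := by
      rw [← Set.ncard_univ]
      have huniv : (Set.univ : Set (Σ i : Fin r, Σ j : Fin r, Fin (nij i j)))
          = {v : (Σ i : Fin r, Σ j : Fin r, Fin (nij i j)) | True} := by
        ext v; simp
      rw [huniv, card_block nij (fun _ _ => True)]
      simp only [if_true]
      rw [Finset.sum_congr rfl fun i _ => hsum i, Finset.sum_const, Finset.card_univ,
        Fintype.card_fin, smul_eq_mul]
    omega
  have : (m:ℝ) = (r:ℝ) * n / h := by
    rw [eq_div_iff (ne_of_gt hhR)]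
    exact_mod_cast hcards
  rw [this] at hm
  exact lt_irrefl _ hm
end

section
/- Assuming the almost-perfect tiling theorem (for every graph H with χ(H) = r ≥ 3 and every α > 0 there are n_0 and C such that every balanced r-partite G on rn vertices, n ≥ n_0, with δ*(G) ≥ (1 − 1/χ_cr(H) + α)n admits an H-tiling covering all but at most C vertices), deduce: for every ψ > 0 there exists n_0 such that every balanced r-partite graph G on rn vertices with n ≥ n_0 and δ*(G) ≥ (1 − 1/χ_cr(H))·n admits an H-tiling covering all but at most ψn vertices. (The deduction adds m = 2kαn universally-joined dummy vertices to each class, where k = χ_cr(H) and α = ψ/(2rkh).) -/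
/-- The critical chromatic number `χ_cr(H) = (r − 1)/(1 − σ(H))`. -/
noncomputable def chiCr (V : Type*) [Fintype V] (H : SimpleGraph V) (r : ℕ) : ℝ :=
  ((r : ℝ) - 1) / (1 - sigmaH V H r)

/-! ### Auxiliary lemmas -/

lemma sigma_bounds {VH : Type*} [Fintype VH] (H : SimpleGraph VH) (r : ℕ)
    (hr : 3 ≤ r) (hchrom : H.chromaticNumber = (r : ℕ∞)) :
    0 ≤ sigmaH VH H r ∧ sigmaH VH H r ≤ 1 / r ∧ 1 ≤ Fintype.card VH := by
  classical
  have hcol : H.Colorable r := by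
    rw [← SimpleGraph.chromaticNumber_le_iff_colorable, hchrom]
  have hne : Nonempty VH := by
    by_contra hemp
    rw [not_nonempty_iff] at hemp
    have h0 := H.chromaticNumber_eq_zero_of_isEmpty
    rw [hchrom] at h0
    have : r = 0 := by exact_mod_cast h0
    omega
  have hcardpos : 0 < Fintype.card VH := Fintype.card_pos
  obtain ⟨C⟩ := hcol
  have hrpos : (0:ℝ) < r := by positivity
  set c : VH → Fin r := fun v => C v with hc
  have hpc : ProperCol H c := fun u v huv => C.valid huv
  set S := { x : ℝ | ∃ c : VH → Fin r, ProperCol H c ∧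
    ∃ i : Fin r, x = (Set.ncard {v | c v = i} : ℝ) / (Fintype.card VH : ℝ) } with hS
  have hrne : Nonempty (Fin r) := ⟨⟨0, by omega⟩⟩
  have hSne : S.Nonempty := ⟨_, c, hpc, Classical.arbitrary (Fin r), rfl⟩
  have hbdd : BddBelow S := by
    refine ⟨0, fun x hx => ?_⟩
    obtain ⟨c', _, i, rfl⟩ := hx
    positivity
  have h0 : 0 ≤ sigmaH VH H r := by
    apply le_csInf hSne
    rintro x ⟨c', _, i, rfl⟩
    positivity
  have hsum : ∑ i : Fin r, (Finset.univ.filter fun v => c v = i).card = Fintype.card VH := by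
    rw [← Finset.card_univ]
    exact (Finset.card_eq_sum_card_fiberwise (fun x _ => Finset.mem_univ (c x))).symm
  have hpig : ∃ i : Fin r, r * (Finset.univ.filter fun v => c v = i).card ≤ Fintype.card VH := by
    by_contra hcon
    push_neg at hcon
    have : r * Fintype.card VH < r * Fintype.card VH := by
      calc r * Fintype.card VH = ∑ _i : Fin r, Fintype.card VH := by
            rw [Finset.sum_const, Finset.card_univ, Fintype.card_fin, smul_eq_mul]
        _ < ∑ i : Fin r, r * (Finset.univ.filter fun v => c v = i).card :=
            Finset.sum_lt_sum_of_nonempty (Finset.univ_nonempty) (fun i _ => hcon i)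
        _ = r * ∑ i : Fin r, (Finset.univ.filter fun v => c v = i).card := by
            rw [Finset.mul_sum]
        _ = r * Fintype.card VH := by rw [hsum]
    omega
  obtain ⟨i, hi⟩ := hpig
  have hncard : Set.ncard {v | c v = i} = (Finset.univ.filter fun v => c v = i).card := by
    rw [Set.ncard_eq_toFinset_card']
    congr 1
    ext v
    simp
  have hle : sigmaH VH H r ≤ (Set.ncard {v | c v = i} : ℝ) / (Fintype.card VH : ℝ) :=
    csInf_le hbdd ⟨c, hpc, i, rfl⟩
  have hfrac : (Set.ncard {v | c v = i} : ℝ) / (Fintype.card VH : ℝ) ≤ 1 / r := by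
    rw [div_le_div_iff₀ (by positivity) hrpos, hncard]
    have : (r : ℝ) * ((Finset.univ.filter fun v => c v = i).card : ℝ) ≤ (Fintype.card VH : ℝ) := by
      exact_mod_cast hi
    linarith
  exact ⟨h0, hle.trans hfrac, hcardpos⟩

lemma b_bounds {VH : Type*} [Fintype VH] (H : SimpleGraph VH) (r : ℕ)
    (hr : 3 ≤ r) (hchrom : H.chromaticNumber = (r : ℕ∞)) :
    0 < 1 / chiCr VH H r ∧ 1 / chiCr VH H r ≤ 1 := by
  obtain ⟨h0, h1, _⟩ := sigma_bounds H r hr hchrom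
  have hrpos : (0:ℝ) < r := by positivity
  have hs1 : sigmaH VH H r < 1 := by
    have : (1:ℝ)/r < 1 := by
      rw [div_lt_one hrpos]; exact_mod_cast by omega
    linarith
  have hr1 : (2:ℝ) ≤ (r:ℝ) - 1 := by
    have : (3:ℝ) ≤ r := by exact_mod_cast hr
    linarith
  have hb : 1 / chiCr VH H r = (1 - sigmaH VH H r) / ((r:ℝ) - 1) := by
    rw [chiCr, one_div_div]
  constructor
  · rw [hb]
    apply div_pos <;> linarith
  · rw [hb, div_le_one (by linarith)]; linarith

/-- The map sending a vertex index of the enlarged class to the corresponding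
original vertex index, if any. -/
def toOptAux (n m : ℕ) (x : Fin (n+m)) : Option (Fin n) :=
  if h : (x:ℕ) < n then some ⟨x, h⟩ else none

/-- The enlarged graph obtained by adding `m` dummy vertices to each class,
each adjacent to everything outside its own class. -/
def auxG {r n m : ℕ} (G : SimpleGraph (Fin r × Fin n)) :
    SimpleGraph (Fin r × Fin (n+m)) where
  Adj p q := p.1 ≠ q.1 ∧ ∀ a b, toOptAux n m p.2 = some a → toOptAux n m q.2 = some b →
    G.Adj (p.1, a) (q.1, b)
  symm := by
    constructor
    rintro p q ⟨h1, h2⟩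
    exact ⟨h1.symm, fun a b ha hb => (h2 b a hb ha).symm⟩
  loopless := ⟨fun p hp => hp.1 rfl⟩

lemma toOptAux_real {n m : ℕ} (x : Fin (n+m)) (hx : (x:ℕ) < n) :
    toOptAux n m x = some ⟨x, hx⟩ := dif_pos hx

lemma toOptAux_dummy {n m : ℕ} (x : Fin (n+m)) (hx : ¬ (x:ℕ) < n) :
    toOptAux n m x = none := dif_neg hx

lemma ncard_dummy (n m : ℕ) : Set.ncard {y : Fin (n+m) | n ≤ (y:ℕ)} = m := by
  have : {y : Fin (n+m) | n ≤ (y:ℕ)} =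
      Set.range (fun t : Fin m => (⟨n + t, by omega⟩ : Fin (n+m))) := by
    ext y
    simp only [Set.mem_setOf_eq, Set.mem_range]
    constructor
    · intro hy
      exact ⟨⟨(y:ℕ) - n, by omega⟩, by apply Fin.ext; simp; omega⟩
    · rintro ⟨t, rfl⟩; simp
  rw [this, ← Set.image_univ, Set.ncard_image_of_injective _ (fun a b hab => by
    apply Fin.ext
    have := congrArg Fin.val hab
    simpa using this), Set.ncard_univ, Nat.card_eq_fintype_card, Fintype.card_fin]

lemma card_dummy_finset (n m : ℕ) :
    (Finset.univ.filter fun y : Fin (n+m) => n ≤ (y:ℕ)).card = m := by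
  have h := ncard_dummy n m
  rwa [Set.ncard_eq_toFinset_card', Set.toFinset_setOf] at h

lemma auxG_deg_real {r n m : ℕ} (G : SimpleGraph (Fin r × Fin n)) (i j : Fin r) (hij : j ≠ i)
    (x : Fin (n+m)) (hx : (x:ℕ) < n) :
    Set.ncard {y : Fin n | G.Adj (i, ⟨x, hx⟩) (j, y)} + m ≤
      Set.ncard {y : Fin (n+m) | (auxG (m := m) G).Adj (i, x) (j, y)} := by
  classical
  set a : Fin n := ⟨x, hx⟩
  set N : Set (Fin n) := {y | G.Adj (i, a) (j, y)}
  set emb : Fin n → Fin (n+m) := fun b => ⟨b, by omega⟩ with hemb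
  have hembinj : Function.Injective emb := fun b b' hbb => by
    apply Fin.ext
    simpa [emb] using congrArg Fin.val hbb
  set A : Set (Fin (n+m)) := emb '' N
  set D : Set (Fin (n+m)) := {y | n ≤ (y:ℕ)}
  have hsub : A ∪ D ⊆ {y : Fin (n+m) | (auxG (m := m) G).Adj (i, x) (j, y)} := by
    rintro y (⟨b, hb, rfl⟩ | hy)
    · refine ⟨hij.symm, fun a' b' ha' hb' => ?_⟩
      rw [toOptAux_real x hx] at ha'
      rw [toOptAux_real (emb b) (by simpa [emb] using b.isLt)] at hb'
      have ha'' : a = a' := by injection ha'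
      have hb'' : b = b' := by
        have := Option.some.inj hb'
        apply Fin.ext
        simpa [emb] using congrArg Fin.val this
      rw [← ha'', ← hb'']
      exact hb
    · refine ⟨hij.symm, fun a' b' ha' hb' => ?_⟩
      rw [toOptAux_dummy y (by simp only [D, Set.mem_setOf_eq] at hy; omega)] at hb'
      exact absurd hb' (by simp)
  have hdisj : Disjoint A D := by
    rw [Set.disjoint_left]
    rintro y ⟨b, _, rfl⟩ hy
    simp only [D, Set.mem_setOf_eq, emb] at hy
    omega
  have hAcard : A.ncard = N.ncard := Set.ncard_image_of_injective _ hembinj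
  have hDcard : D.ncard = m := ncard_dummy n m
  calc N.ncard + m = (A ∪ D).ncard := by
        rw [Set.ncard_union_eq hdisj (Set.toFinite _) (Set.toFinite _), hAcard, hDcard]
    _ ≤ _ := Set.ncard_le_ncard hsub (Set.toFinite _)

lemma auxG_deg_dummy {r n m : ℕ} (G : SimpleGraph (Fin r × Fin n)) (i j : Fin r) (hij : j ≠ i)
    (x : Fin (n+m)) (hx : ¬ (x:ℕ) < n) :
    Set.ncard {y : Fin (n+m) | (auxG (m := m) G).Adj (i, x) (j, y)} = n + m := by
  have : {y : Fin (n+m) | (auxG (m := m) G).Adj (i, x) (j, y)} = Set.univ := by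
    ext y
    simp only [Set.mem_setOf_eq, Set.mem_univ, iff_true]
    refine ⟨hij.symm, fun a b ha hb => ?_⟩
    rw [toOptAux_dummy x hx] at ha
    exact absurd ha (by simp)
  rw [this, Set.ncard_univ, Nat.card_eq_fintype_card]
  simp

lemma arith_deg (b α nR mR : ℝ) (hαb2 : α ≤ b/2)
    (hn0 : 0 ≤ nR) (hm0 : 0 ≤ mR) (hmb : 2*α*nR ≤ mR*b) :
    (1-b+α)*(nR+mR) ≤ (1-b)*nR + mR := by
  nlinarith [mul_nonneg hm0 (by linarith : (0:ℝ) ≤ b/2 - α)]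

lemma arith_final (ψ rR hR CR MR MgR mR nR : ℝ)
    (hψ : 0 < ψ) (hh : 1 ≤ hR) (hr : 3 ≤ rR) (hm0 : 0 ≤ mR) (hn0 : 0 ≤ nR)
    (hub : mR ≤ ψ/(2*rR*hR)*nR + 1)
    (hnψ : 2*(rR*hR+CR) ≤ ψ*nR)
    (hcount : rR*(nR+mR) ≤ MR*hR + CR)
    (hMle : MR ≤ MgR + rR*mR) :
    rR*nR ≤ MgR*hR + ψ*nR := by
  have hrh : (0:ℝ) < 2*rR*hR := by nlinarith
  have hub' : mR * (2*rR*hR) ≤ ψ*nR + 2*rR*hR := by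
    have := mul_le_mul_of_nonneg_right hub hrh.le
    calc mR * (2*rR*hR) ≤ (ψ/(2*rR*hR)*nR + 1) * (2*rR*hR) := this
      _ = ψ*nR + 2*rR*hR := by field_simp
  have hψn0 : 0 ≤ ψ*nR := by positivity
  have hMh : MR*hR ≤ (MgR + rR*mR)*hR := by
    apply mul_le_mul_of_nonneg_right hMle (by linarith)
  have hkey : rR*mR*(hR-1) + CR ≤ ψ*nR := by
    have h1 : mR * (2*rR*hR) * (hR - 1) ≤ (ψ*nR + 2*rR*hR) * (hR - 1) :=
      mul_le_mul_of_nonneg_right hub' (by linarith)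
    have h2 : 2*(rR*hR+CR)*hR ≤ ψ*nR*hR :=
      mul_le_mul_of_nonneg_right hnψ (by linarith)
    nlinarith [h1, h2, hψn0, mul_nonneg hm0 (by linarith : (0:ℝ) ≤ rR)]
  nlinarith [hMh, hcount, hkey]

/-- Assuming the almost-perfect tiling theorem for `H` (on `h` vertices, with
`χ(H) = r ≥ 3`): for every `α > 0` there are `n₀, C` such that every balanced
`r`-partite `G` on `rn` vertices with `n ≥ n₀` and `δ*(G) ≥ (1 − 1/χ_cr(H) + α)n`
has an `H`-tiling covering all but at most `C` vertices.  Deduce: for every `ψ > 0`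
there is `n₀` such that every balanced `r`-partite `G` on `rn` vertices with
`n ≥ n₀` and `δ*(G) ≥ (1 − 1/χ_cr(H))n` has an `H`-tiling covering all but at most
`ψn` vertices. -/
theorem stmt13 {VH : Type*} [Fintype VH] (H : SimpleGraph VH) (r h : ℕ)
    (hr : 3 ≤ r) (hcard : Fintype.card VH = h)
    (hchrom : H.chromaticNumber = (r : ℕ∞))
    (hyp : ∀ α : ℝ, 0 < α → ∃ n₀ C : ℕ, ∀ n : ℕ, n₀ ≤ n →
      ∀ G : SimpleGraph (Fin r × Fin n),
        (∀ u v : Fin r × Fin n, G.Adj u v → u.1 ≠ v.1) →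
        (∀ (u : Fin r × Fin n) (j : Fin r), j ≠ u.1 →
          (1 - 1 / chiCr VH H r + α) * n ≤
            (Set.ncard {y : Fin n | G.Adj u (j, y)} : ℝ)) →
        ∃ (m : ℕ) (F : Fin m → VH → Fin r × Fin n),
          IsHTiling H G F ∧ r * n ≤ m * h + C) :
    ∀ ψ : ℝ, 0 < ψ → ∃ n₀ : ℕ, ∀ n : ℕ, n₀ ≤ n →
      ∀ G : SimpleGraph (Fin r × Fin n),
        (∀ u v : Fin r × Fin n, G.Adj u v → u.1 ≠ v.1) →
        (∀ (u : Fin r × Fin n) (j : Fin r), j ≠ u.1 →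
          (1 - 1 / chiCr VH H r) * n ≤
            (Set.ncard {y : Fin n | G.Adj u (j, y)} : ℝ)) →
        ∃ (m : ℕ) (F : Fin m → VH → Fin r × Fin n),
          IsHTiling H G F ∧ ((r : ℝ) * n ≤ m * h + ψ * n) := by
  classical
  intro ψ hψ
  obtain ⟨hb0, hb1⟩ := b_bounds H r hr hchrom
  obtain ⟨_, _, hcard1⟩ := sigma_bounds H r hr hchrom
  set b : ℝ := 1 / chiCr VH H r with hbdef
  have hh1 : 1 ≤ h := hcard ▸ hcard1
  have hhR : (1:ℝ) ≤ (h:ℝ) := by exact_mod_cast hh1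
  have hrR : (3:ℝ) ≤ (r:ℝ) := by exact_mod_cast hr
  set α : ℝ := b * min (ψ / (4 * r * h)) (1/2) with hαdef
  have hmin0 : 0 < min (ψ / (4 * r * h)) (1/2) := by
    apply lt_min
    · apply div_pos hψ; positivity
    · norm_num
  have hα0 : 0 < α := mul_pos hb0 hmin0
  have hαb2 : α ≤ b / 2 := by
    have := min_le_right (ψ / (4 * r * h)) (1/2)
    calc α ≤ b * (1/2) := by
          apply mul_le_mul_of_nonneg_left this hb0.le
      _ = b / 2 := by ring
  obtain ⟨n₁, C, hmain⟩ := hyp α hα0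
  refine ⟨max n₁ ⌈2 * ((r:ℝ) * h + C) / ψ⌉₊, fun n hn G hpart hdeg => ?_⟩
  have hn1 : n₁ ≤ n := le_trans (le_max_left _ _) hn
  have hnψ : 2 * ((r:ℝ) * h + C) ≤ ψ * n := by
    have h1 : (⌈2 * ((r:ℝ) * h + C) / ψ⌉₊ : ℕ) ≤ n := le_trans (le_max_right _ _) hn
    have h2 : 2 * ((r:ℝ) * h + C) / ψ ≤ (n:ℝ) := by
      refine le_trans (Nat.le_ceil _) ?_
      exact_mod_cast h1
    rw [div_le_iff₀ hψ] at h2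
    linarith
  set m : ℕ := ⌈(2 * α / b) * (n:ℝ)⌉₊ with hmdef
  have hm_lb : (2 * α / b) * (n:ℝ) ≤ (m:ℝ) := Nat.le_ceil _
  have hm_ub : (m:ℝ) ≤ (2 * α / b) * (n:ℝ) + 1 :=
    (Nat.ceil_lt_add_one (by positivity)).le
  have hab : 2 * α / b = 2 * min (ψ / (4 * r * h)) (1/2) := by
    rw [hαdef]
    field_simp
  -- the auxiliary graph
  set G' : SimpleGraph (Fin r × Fin (n+m)) := auxG (m := m) G with hG'def
  have hpart' : ∀ u v : Fin r × Fin (n+m), G'.Adj u v → u.1 ≠ v.1 := fun u v hu => hu.1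
  have hdeg' : ∀ (u : Fin r × Fin (n+m)) (j : Fin r), j ≠ u.1 →
      (1 - b + α) * (↑(n+m)) ≤ (Set.ncard {y : Fin (n+m) | G'.Adj u (j, y)} : ℝ) := by
    rintro ⟨i, x⟩ j hj
    have hbα : (1 - b + α) ≤ 1 := by linarith
    by_cases hx : (x:ℕ) < n
    · have hkey := auxG_deg_real (m := m) G i j hj x hx
      have hdG := hdeg (i, ⟨x, hx⟩) j hj
      have hcast : (Set.ncard {y : Fin n | G.Adj (i, ⟨x, hx⟩) (j, y)} : ℝ) + (m:ℝ) ≤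
          (Set.ncard {y : Fin (n+m) | G'.Adj (i, x) (j, y)} : ℝ) := by
        exact_mod_cast hkey
      have hmb : 2 * α * (n:ℝ) ≤ (m:ℝ) * b := by
        have h' : (2 * α / b) * (n:ℝ) = (2 * α * n) / b := by ring
        rw [h', div_le_iff₀ hb0] at hm_lb
        linarith
      have hstep : (1 - b + α) * (↑(n+m)) ≤ (1 - b) * n + m := by
        push_cast
        exact arith_deg b α n m hαb2 (Nat.cast_nonneg n) (Nat.cast_nonneg m) hmb
      calc (1 - b + α) * (↑(n+m)) ≤ (1 - b) * n + m := hstep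
        _ ≤ (Set.ncard {y : Fin n | G.Adj (i, ⟨x, hx⟩) (j, y)} : ℝ) + m := by linarith
        _ ≤ _ := hcast
    · rw [auxG_deg_dummy (m := m) G i j hj x hx]
      push_cast
      nlinarith [(Nat.cast_nonneg n : (0:ℝ) ≤ (n:ℝ)), (Nat.cast_nonneg m : (0:ℝ) ≤ (m:ℝ))]
  obtain ⟨M, F, ⟨hF1, hF2⟩, hcount⟩ :=
    hmain (n + m) (le_trans hn1 (Nat.le_add_right n m)) G' hpart' hdeg'
  -- good copies avoid the dummy vertices
  set good : Fin M → Prop := fun j => ∀ u : VH, ((F j u).2 : ℕ) < n with hgooddef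
  set Mg : ℕ := (Finset.univ.filter good).card with hMgdef
  have hVHne : Nonempty VH := Fintype.card_pos_iff.mp (by omega)
  have hbad : (Finset.univ.filter fun j => ¬ good j).card ≤ r * m := by
    set g : Fin M → VH := fun j =>
      if hj : ∃ u : VH, ¬ ((F j u).2 : ℕ) < n then hj.choose else Classical.arbitrary VH
      with hgdef
    have hcardD : ((Finset.univ : Finset (Fin r)) ×ˢ
        (Finset.univ.filter fun y : Fin (n+m) => n ≤ (y:ℕ))).card = r * m := by
      rw [Finset.card_product, Finset.card_univ, Fintype.card_fin, card_dummy_finset]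
    rw [← hcardD]
    apply Finset.card_le_card_of_injOn (fun j => F j (g j))
    · intro j hj
      rw [Finset.mem_coe, Finset.mem_filter] at hj
      have hex : ∃ u : VH, ¬ ((F j u).2 : ℕ) < n := by
        by_contra hcon
        push_neg at hcon
        exact hj.2 (fun u => hcon u)
      have hspec : ¬ ((F j (g j)).2 : ℕ) < n := by
        rw [hgdef]
        simp only [hex, dif_pos]
        exact hex.choose_spec
      rw [Finset.mem_coe, Finset.mem_product]
      exact ⟨Finset.mem_univ _, Finset.mem_filter.mpr ⟨Finset.mem_univ _, (by omega : n ≤ ((F j (g j)).2 : ℕ))⟩⟩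
    · intro j _ j' _ hjj
      exact (hF2 j j' (g j) (g j') hjj).1
  have hMle : M ≤ Mg + r * m := by
    have hsplit := Finset.card_filter_add_card_filter_not
      (s := (Finset.univ : Finset (Fin M))) (p := good)
    rw [Finset.card_univ, Fintype.card_fin] at hsplit
    omega
  -- build the tiling of G from the good copies
  set e : {x // x ∈ Finset.univ.filter good} ≃ Fin Mg := (Finset.univ.filter good).equivFin
    with hedef
  have hgoodmem : ∀ (j : Fin Mg) (u : VH), ((F (e.symm j).1 u).2 : ℕ) < n := by
    intro j u
    exact (Finset.mem_filter.mp (e.symm j).2).2 u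
  refine ⟨Mg, fun j u =>
    ((F (e.symm j).1 u).1, ⟨((F (e.symm j).1 u).2 : ℕ), hgoodmem j u⟩), ⟨?_, ?_⟩, ?_⟩
  · intro j u v huv
    obtain ⟨hne', hP⟩ := hF1 (e.symm j).1 u v huv
    exact hP _ _ (toOptAux_real _ (hgoodmem j u)) (toOptAux_real _ (hgoodmem j v))
  · intro j j' u u' hjj
    have hjj' : ((F (e.symm j).1 u).1, (⟨((F (e.symm j).1 u).2 : ℕ), hgoodmem j u⟩ : Fin n)) =
        ((F (e.symm j').1 u').1, (⟨((F (e.symm j').1 u').2 : ℕ), hgoodmem j' u'⟩ : Fin n)) := hjj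
    injection hjj' with h1 h2f
    have h2 : ((F (e.symm j).1 u).2 : ℕ) = ((F (e.symm j').1 u').2 : ℕ) := by
      have := congrArg Fin.val h2f
      simpa using this
    have hFF : F (e.symm j).1 u = F (e.symm j').1 u' :=
      Prod.ext_iff.mpr ⟨h1, Fin.ext h2⟩
    obtain ⟨hj0, hu⟩ := hF2 _ _ _ _ hFF
    exact ⟨e.symm.injective (Subtype.ext hj0), hu⟩
  · -- counting
    have hcountR : (r:ℝ) * ((n:ℝ) + m) ≤ (M:ℝ) * h + C := by exact_mod_cast hcount
    have hMleR : (M:ℝ) ≤ (Mg:ℝ) + (r:ℝ) * m := by exact_mod_cast hMle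
    have hub2 : (m:ℝ) ≤ (ψ / (2 * r * h)) * n + 1 := by
      have hle2 : 2 * α / b ≤ ψ / (2 * r * h) := by
        rw [hab]
        have := min_le_left (ψ / (4 * r * h)) (1/2)
        calc 2 * min (ψ / (4 * r * h)) (1/2) ≤ 2 * (ψ / (4 * r * h)) := by linarith
          _ = ψ / (2 * r * h) := by ring
      have := mul_le_mul_of_nonneg_right hle2 (Nat.cast_nonneg n : (0:ℝ) ≤ n)
      linarith
    exact arith_final ψ r h C M Mg m n hψ hhR hrR (Nat.cast_nonneg m) (Nat.cast_nonneg n)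
      hub2 hnψ hcountR hMleR
end
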